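/- arXiv:1109.5733 — 7 statements merged into one kernel-verified Lean document; each statement's English description precedes it below -/
import Mathlib

section
/- Let V be a finite-dimensional real vector space and let P ⊆ V be a nonempty polyhedron. Define 𝒫 : [0,1] → (subsets of V) by 𝒫(t) = tP = {t·v : v ∈ P} for t ∈ (0,1] and 𝒫(0) = ρ(P), the recession cone of P. Then 𝒫 is a continuous family of polyhedra in V parameterized by [0,1]. -/
open Set Pointwise

/-- A polyhedron: a finite intersection of closed halfspaces `{v : ⟨uᵢ, v⟩ ≤ cᵢ}`. -/
def IsPolyhedron {V : Type*} [AddCommGroup V] [Module ℝ V] (P : Set V) : Prop :=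
  ∃ (m : ℕ) (u : Fin m → (V →ₗ[ℝ] ℝ)) (c : Fin m → ℝ),
    P = ⋂ i, {v : V | u i v ≤ c i}

/-- The recession cone `ρ(P) = {w : v + w ∈ P for all v ∈ P}`. -/
def recCone {V : Type*} [AddCommGroup V] [Module ℝ V] (P : Set V) : Set V :=
  {w : V | ∀ v ∈ P, v + w ∈ P}

/-- A continuous family of polyhedra in `V` parameterized by `[a, b]`: a function `F` of the
form `F t = ⋂ᵢ {v : ⟨uᵢ, v⟩ ≤ fᵢ t}` with each `fᵢ` continuous on `[a, b]`. -/
def IsContFamilyOfPolyhedra {V : Type*} [AddCommGroup V] [Module ℝ V] (a b : ℝ)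
    (F : ℝ → Set V) : Prop :=
  ∃ (m : ℕ) (u : Fin m → (V →ₗ[ℝ] ℝ)) (f : Fin m → ℝ → ℝ),
    (∀ i, ContinuousOn (f i) (Set.Icc a b)) ∧
    ∀ t ∈ Set.Icc a b, F t = ⋂ i, {v : V | u i v ≤ f i t}

/-- For a nonempty polyhedron `P`, the family `t ↦ t • P` for `t ∈ (0, 1]`, extended by
`ρ(P)` at `t = 0`, is a continuous family of polyhedra parameterized by `[0, 1]`. -/
theorem contFamily_smul_recCone {V : Type*} [AddCommGroup V] [Module ℝ V]
    [FiniteDimensional ℝ V] (P : Set V) (hP : IsPolyhedron P) (hne : P.Nonempty)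
    (F : ℝ → Set V) (hF0 : F 0 = recCone P)
    (hFt : ∀ t ∈ Set.Ioc (0 : ℝ) 1, F t = t • P) :
    IsContFamilyOfPolyhedra 0 1 F := by

  obtain ⟨m, u, c, hPc⟩ := hP
  refine ⟨m, u, fun i t => t * c i, fun i => (continuous_mul_right _).continuousOn, ?_⟩
  rintro t ⟨ht0, ht1⟩
  rcases eq_or_lt_of_le ht0 with h | h
  · subst h
    rw [hF0]
    ext w
    simp only [mem_iInter, mem_setOf_eq, zero_mul]
    constructor
    · intro hw i
      obtain ⟨v0, hv0⟩ := hne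
      have key : ∀ n : ℕ, v0 + (n : ℝ) • w ∈ P := by
        intro n
        induction n with
        | zero => simpa using hv0
        | succ n ih =>
          have h1 := hw _ ih
          have : v0 + ((n : ℝ) + 1) • w = v0 + (n : ℝ) • w + w := by
            rw [add_smul, one_smul]; abel
          rw [show ((n + 1 : ℕ) : ℝ) = (n : ℝ) + 1 by push_cast; ring, this]
          exact h1
      by_contra hpos
      push_neg at hpos
      obtain ⟨n, hn⟩ := exists_nat_gt ((c i - u i v0) / u i w)
      have hmem := key n
      rw [hPc] at hmem
      have h2 := mem_iInter.mp hmem i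
      simp only [mem_setOf_eq, map_add, map_smul, smul_eq_mul] at h2
      have := (div_lt_iff₀ hpos).mp hn
      linarith
    · intro hw v hv
      rw [hPc] at hv ⊢
      simp only [mem_iInter, mem_setOf_eq, map_add] at *
      intro i
      linarith [hv i, hw i]
  · rw [hFt t ⟨h, ht1⟩, hPc]
    ext v
    simp only [mem_iInter, mem_setOf_eq]
    constructor
    · rintro ⟨p, hp, rfl⟩ i
      simp only [mem_iInter, mem_setOf_eq] at hp
      rw [map_smul, smul_eq_mul]
      exact mul_le_mul_of_nonneg_left (hp i) h.le
    · intro hv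
      refine ⟨t⁻¹ • v, mem_iInter.mpr fun i => ?_, ?_⟩
      · simp only [mem_setOf_eq, map_smul, smul_eq_mul]
        rw [inv_mul_le_iff₀ h]
        exact hv i
      · exact smul_inv_smul₀ h.ne' v
end

section
/- Let V and W be finite-dimensional real vector spaces, let π : V → W be a surjective linear map, and let 𝒫 be a continuous family of polyhedra in V parameterized by [a,b]. Then t ↦ π(𝒫(t)) is a continuous family of polyhedra in W parameterized by [a,b]. -/
open Module

/-- Fourier–Motzkin elimination, arithmetic core. -/
lemma fm_core {m : ℕ} (c g r : Fin m → ℝ) :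
    (∃ l : ℝ, ∀ i, g i + l * c i ≤ r i) ↔
      ((∀ i, c i = 0 → g i ≤ r i) ∧
        ∀ i j, 0 < c i → c j < 0 → c i * g j - c j * g i ≤ c i * r j - c j * r i) := by
  classical
  constructor
  · rintro ⟨l, hl⟩
    refine ⟨fun i hi => by have := hl i; simpa [hi] using this, fun i j hi hj => ?_⟩
    have h1 := hl i; have h2 := hl j
    nlinarith [mul_pos hi (neg_pos.2 hj)]
  · rintro ⟨h0, hp⟩
    set P : Finset (Fin m) := Finset.univ.filter fun i => 0 < c i with hP
    set N : Finset (Fin m) := Finset.univ.filter fun i => c i < 0 with hN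
    rcases P.eq_empty_or_nonempty with hPe | hPne
    · have hPe' : ∀ i, ¬ 0 < c i := by
        intro i hi
        have : i ∈ P := by simp [hP, hi]
        simp [hPe] at this
      rcases N.eq_empty_or_nonempty with hNe | hNne
      · have hNe' : ∀ i, ¬ c i < 0 := by
          intro i hi
          have : i ∈ N := by simp [hN, hi]
          simp [hNe] at this
        refine ⟨0, fun i => ?_⟩
        have hci : c i = 0 := le_antisymm (not_lt.1 (hPe' i)) (not_lt.1 (hNe' i))
        simpa [hci] using h0 i hci
      · obtain ⟨j₀, hj₀mem, hj₀max⟩ := N.exists_max_image (fun j => (r j - g j) / c j) hNne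
        have hj₀ : c j₀ < 0 := (Finset.mem_filter.1 hj₀mem).2
        refine ⟨(r j₀ - g j₀) / c j₀, fun i => ?_⟩
        rcases lt_trichotomy (c i) 0 with hci | hci | hci
        · have hle := hj₀max i (by simp [hN, hci])
          have := (div_le_iff_of_neg hci).1 hle
          linarith
        · simpa [hci] using h0 i hci
        · exact absurd hci (hPe' i)
    · obtain ⟨i₀, hi₀mem, hi₀min⟩ := P.exists_min_image (fun i => (r i - g i) / c i) hPne
      have hi₀ : 0 < c i₀ := (Finset.mem_filter.1 hi₀mem).2
      refine ⟨(r i₀ - g i₀) / c i₀, fun i => ?_⟩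
      have hq : (r i₀ - g i₀) / c i₀ * c i₀ = r i₀ - g i₀ := div_mul_cancel₀ _ (ne_of_gt hi₀)
      rcases lt_trichotomy (c i) 0 with hci | hci | hci
      · have hpair := hp i₀ i hi₀ hci
        nlinarith [hq]
      · simpa [hci] using h0 i hci
      · have hle := hi₀min i (by simp [hP, hci])
        have := (le_div_iff₀ hci).1 hle
        linarith

lemma ofFintype {V : Type*} [AddCommGroup V] [Module ℝ V] {a b : ℝ} {F : ℝ → Set V}
    (ι : Type*) [Fintype ι] (u : ι → V →ₗ[ℝ] ℝ) (f : ι → ℝ → ℝ)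
    (hf : ∀ i, ContinuousOn (f i) (Set.Icc a b))
    (h : ∀ t ∈ Set.Icc a b, F t = ⋂ i, {v : V | u i v ≤ f i t}) :
    IsContFamilyOfPolyhedra a b F := by
  classical
  let e := (Fintype.equivFin ι).symm
  refine ⟨Fintype.card ι, u ∘ e, f ∘ e, fun i => hf _, fun t ht => ?_⟩
  rw [h t ht]
  exact (e.surjective.iInter_comp fun i => {v : V | u i v ≤ f i t}).symm

/-- One Fourier–Motzkin elimination step: image under a map with kernel contained in a line. -/
lemma step {V W : Type*} [AddCommGroup V] [Module ℝ V] [AddCommGroup W] [Module ℝ W]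
    (π : V →ₗ[ℝ] W) (hπ : Function.Surjective π) (e : V) (he : e ∈ LinearMap.ker π)
    (hker : LinearMap.ker π ≤ Submodule.span ℝ {e}) (a b : ℝ) (F : ℝ → Set V)
    (hF : IsContFamilyOfPolyhedra a b F) :
    IsContFamilyOfPolyhedra a b (fun t => π '' F t) := by
  classical
  obtain ⟨m, u, f, hf, hFt⟩ := hF
  obtain ⟨s, hs⟩ := π.exists_rightInverse_of_surjective (LinearMap.range_eq_top.2 hπ)
  have hπs : ∀ x, π (s x) = x := fun x => DFunLike.congr_fun hs x
  have hπe : π e = 0 := he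
  set c : Fin m → ℝ := fun i => u i e with hc
  let ι := {i : Fin m // c i = 0} ⊕ ({i : Fin m // 0 < c i} × {j : Fin m // c j < 0})
  let U : ι → (W →ₗ[ℝ] ℝ) := fun k => match k with
    | .inl z => (u z.1).comp s
    | .inr (i, j) => c i.1 • (u j.1).comp s - c j.1 • (u i.1).comp s
  let G : ι → ℝ → ℝ := fun k => match k with
    | .inl z => f z.1
    | .inr (i, j) => fun t => c i.1 * f j.1 t - c j.1 * f i.1 t
  refine ofFintype ι U G (fun k => ?_) (fun t ht => ?_)
  · match k with
    | .inl z => exact hf z.1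
    | .inr (i, j) =>
        exact (continuousOn_const.mul (hf j.1)).sub (continuousOn_const.mul (hf i.1))
  · ext w
    have key : w ∈ π '' F t ↔ ∃ l : ℝ, ∀ i, u i (s w) + l * c i ≤ f i t := by
      constructor
      · rintro ⟨v, hv, rfl⟩
        have hv' : v - s (π v) ∈ LinearMap.ker π := by
          simp [LinearMap.mem_ker, map_sub, hπs]
        obtain ⟨l, hl⟩ := Submodule.mem_span_singleton.1 (hker hv')
        refine ⟨l, fun i => ?_⟩
        have hvF : u i v ≤ f i t := by
          rw [hFt t ht] at hv
          exact Set.mem_iInter.1 hv i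
        have : u i v = u i (s (π v)) + l * c i := by
          have hveq : v = s (π v) + l • e := by rw [hl]; abel
          conv_lhs => rw [hveq]
          simp [hc, mul_comm]
        linarith
      · rintro ⟨l, hl⟩
        refine ⟨s w + l • e, ?_, by simp [map_add, hπs, hπe]⟩
        rw [hFt t ht]
        refine Set.mem_iInter.2 fun i => ?_
        have := hl i
        simpa [map_add, map_smul, hc, mul_comm] using this
    refine key.trans ((fm_core c (fun i => u i (s w)) fun i => f i t).trans ?_)
    simp only [Set.mem_iInter, Set.mem_setOf_eq]
    constructor
    · rintro ⟨h1, h2⟩ k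
      match k with
      | .inl z => exact h1 z.1 z.2
      | .inr (i, j) =>
          show (c i.1 • (u j.1).comp s - c j.1 • (u i.1).comp s) w ≤
            c i.1 * f j.1 t - c j.1 * f i.1 t
          simp only [LinearMap.sub_apply, LinearMap.smul_apply, LinearMap.coe_comp,
            Function.comp_apply, smul_eq_mul]
          linarith [h2 i.1 j.1 i.2 j.2]
    · intro h
      refine ⟨fun i hi => h (.inl ⟨i, hi⟩), fun i j hi hj => ?_⟩
      have : (c i • (u j).comp s - c j • (u i).comp s) w ≤ c i * f j t - c j * f i t :=
        h (.inr (⟨i, hi⟩, ⟨j, hj⟩))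
      simp only [U, LinearMap.sub_apply, LinearMap.smul_apply, LinearMap.coe_comp,
        Function.comp_apply, smul_eq_mul] at this
      linarith

lemma contFamily_image_aux : ∀ (n : ℕ) {V W : Type*} [AddCommGroup V] [Module ℝ V]
    [FiniteDimensional ℝ V] [AddCommGroup W] [Module ℝ W] (π : V →ₗ[ℝ] W),
    Function.Surjective π → finrank ℝ (LinearMap.ker π) = n → ∀ (a b : ℝ) (F : ℝ → Set V),
    IsContFamilyOfPolyhedra a b F → IsContFamilyOfPolyhedra a b (fun t => π '' F t) := by
  intro n
  induction n with
  | zero =>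
      intro V W _ _ _ _ _ π hπ hn a b F hF
      have hker : LinearMap.ker π = ⊥ := Submodule.finrank_eq_zero.1 hn
      exact step π hπ 0 (Submodule.zero_mem _) (by rw [hker]; exact bot_le) a b F hF
  | succ n ih =>
      intro V W _ _ _ _ _ π hπ hn a b F hF
      have : Nontrivial (LinearMap.ker π) := finrank_pos_iff (R := ℝ) |>.1 (by omega)
      obtain ⟨⟨e, heker⟩, hne0⟩ := exists_ne (0 : LinearMap.ker π)
      have hne : e ≠ 0 := fun h => hne0 (Subtype.ext h)
      set K : Submodule ℝ V := Submodule.span ℝ {e} with hK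
      have hKle : K ≤ LinearMap.ker π := by
        rw [hK, Submodule.span_singleton_le_iff_mem]; exact heker
      set π₂ : (V ⧸ K) →ₗ[ℝ] W := K.liftQ π hKle with hπ₂def
      have hcomp : ∀ v : V, π₂ (K.mkQ v) = π v := fun v =>
        DFunLike.congr_fun (K.liftQ_mkQ π hKle) v
      have hπ₂ : Function.Surjective π₂ := by
        intro w
        obtain ⟨v, rfl⟩ := hπ w
        exact ⟨K.mkQ v, hcomp v⟩
      -- the intermediate family
      have hG : IsContFamilyOfPolyhedra a b (fun t => K.mkQ '' F t) := by
        refine step K.mkQ (Submodule.mkQ_surjective K) e ?_ ?_ a b F hF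
        · rw [Submodule.ker_mkQ]; exact Submodule.mem_span_singleton_self e
        · rw [Submodule.ker_mkQ]
      -- finrank of the new kernel
      have hrank : finrank ℝ (LinearMap.ker π₂) = n := by
        have hkq : LinearMap.ker π₂ = Submodule.map K.mkQ (LinearMap.ker π) :=
          Submodule.ker_liftQ K π hKle
        set g : (LinearMap.ker π) →ₗ[ℝ] (V ⧸ K) := K.mkQ.comp (LinearMap.ker π).subtype with hg
        have hrange : LinearMap.range g = Submodule.map K.mkQ (LinearMap.ker π) := by
          rw [hg, LinearMap.range_comp, Submodule.range_subtype]
        have hkerg : LinearMap.ker g = Submodule.comap (LinearMap.ker π).subtype K := by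
          rw [hg, LinearMap.ker_comp, Submodule.ker_mkQ]
        have h1 : finrank ℝ (LinearMap.ker g) = 1 := by
          rw [hkerg]
          rw [LinearEquiv.finrank_eq (Submodule.comapSubtypeEquivOfLe hKle)]
          exact finrank_span_singleton hne
        have hrn := LinearMap.finrank_range_add_finrank_ker g
        rw [h1, hn] at hrn
        have : finrank ℝ (LinearMap.range g) = n := by omega
        rw [hkq, ← hrange]; exact this
      have h2 := ih π₂ hπ₂ hrank a b _ hG
      have heq : (fun t => π₂ '' (K.mkQ '' F t)) = fun t => π '' F t := by
        funext t
        rw [Set.image_image]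
        exact Set.image_congr fun v _ => hcomp v
      rwa [heq] at h2


/-- The image of a continuous family of polyhedra under a surjective linear map is a
continuous family of polyhedra. -/
theorem contFamily_image {V W : Type*} [AddCommGroup V] [Module ℝ V] [FiniteDimensional ℝ V]
    [AddCommGroup W] [Module ℝ W] [FiniteDimensional ℝ W]
    (π : V →ₗ[ℝ] W) (hπ : Function.Surjective π) (a b : ℝ) (hab : a ≤ b)
    (F : ℝ → Set V) (hF : IsContFamilyOfPolyhedra a b F) :
    IsContFamilyOfPolyhedra a b (fun t => π '' F t) := by
  exact contFamily_image_aux (Module.finrank ℝ (LinearMap.ker π)) π hπ rfl a b F hF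
end

section
/- Let V and W be finite-dimensional real vector spaces, let π : V → W be a surjective linear map, and let P ⊆ V be a polyhedron. Then π(P) is a polyhedron in W; in particular, π(P) is a closed subset of W. -/
open Set Module

lemma isPolyhedron_iInter {V : Type*} [AddCommGroup V] [Module ℝ V]
    {ι : Type*} [Fintype ι] (u : ι → (V →ₗ[ℝ] ℝ)) (c : ι → ℝ) :
    IsPolyhedron (⋂ i, {v : V | u i v ≤ c i}) := by
  refine ⟨Fintype.card ι, u ∘ (Fintype.equivFin ι).symm, c ∘ (Fintype.equivFin ι).symm, ?_⟩
  exact ((Fintype.equivFin ι).symm.surjective.iInter_comp _).symm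

lemma IsPolyhedron.image_equiv {V W : Type*} [AddCommGroup V] [Module ℝ V]
    [AddCommGroup W] [Module ℝ W] (e : V ≃ₗ[ℝ] W) {P : Set V}
    (hP : IsPolyhedron P) : IsPolyhedron (⇑e '' P) := by
  obtain ⟨m, u, c, rfl⟩ := hP
  refine ⟨m, fun i => (u i).comp e.symm.toLinearMap, c, ?_⟩
  ext w
  simp only [Set.mem_image, Set.mem_iInter, Set.mem_setOf_eq, LinearMap.comp_apply,
    LinearEquiv.coe_coe]
  constructor
  · rintro ⟨v, hv, rfl⟩ i
    simpa using hv i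
  · intro h
    exact ⟨e.symm w, h, e.apply_symm_apply w⟩

lemma fmDivHelper {ai aj ci cj xi xj : ℝ} (hai : 0 < ai) (haj : aj < 0)
    (h : ai * xj - aj * xi ≤ ai * cj - aj * ci) :
    (cj - xj) / aj ≤ (ci - xi) / ai := by
  rw [div_le_iff_of_neg haj, div_mul_eq_mul_div, div_le_iff₀ hai]
  nlinarith

/-- Fourier–Motzkin elimination of one variable. -/
lemma fm {W : Type*} [AddCommGroup W] [Module ℝ W] (m : ℕ)
    (a : Fin m → ℝ) (u : Fin m → (W →ₗ[ℝ] ℝ)) (c : Fin m → ℝ) :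
    IsPolyhedron (Prod.snd '' ⋂ i, {p : ℝ × W | a i * p.1 + u i p.2 ≤ c i}) := by
  classical
  let f : ({i : Fin m // a i = 0} ⊕ ({i : Fin m // 0 < a i} × {j : Fin m // a j < 0})) →
      (W →ₗ[ℝ] ℝ) := fun x =>
    Sum.rec (fun i => u i.1) (fun q => a q.1.1 • u q.2.1 - a q.2.1 • u q.1.1) x
  let d : ({i : Fin m // a i = 0} ⊕ ({i : Fin m // 0 < a i} × {j : Fin m // a j < 0})) → ℝ :=
    fun x => Sum.rec (fun i => c i.1) (fun q => a q.1.1 * c q.2.1 - a q.2.1 * c q.1.1) x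
  have key : Prod.snd '' (⋂ i, {p : ℝ × W | a i * p.1 + u i p.2 ≤ c i})
      = ⋂ x, {w : W | f x w ≤ d x} := by
    ext w
    constructor
    · rintro ⟨⟨t, w⟩, hp, rfl⟩
      rw [Set.mem_iInter] at hp ⊢
      rintro (i | ⟨i, j⟩)
      · have h0 := hp i.1
        have := i.2
        simp only [f, d, Set.mem_setOf_eq]
        simp only [Set.mem_setOf_eq, this, zero_mul, zero_add] at h0
        exact h0
      · have h1 := hp i.1
        have h2 := hp j.1
        have hi := i.2
        have hj := j.2
        simp only [Set.mem_setOf_eq] at h1 h2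
        simp only [f, d, Set.mem_setOf_eq, LinearMap.sub_apply, LinearMap.smul_apply,
          smul_eq_mul]
        nlinarith [mul_le_mul_of_nonneg_left h2 hi.le, mul_le_mul_of_nonpos_left h1 hj.le]
    · intro hw
      rw [Set.mem_iInter] at hw
      have hzero : ∀ i, a i = 0 → u i w ≤ c i := fun i h => by
        simpa [f, d] using hw (Sum.inl ⟨i, h⟩)
      have hpair : ∀ i j, 0 < a i → a j < 0 →
          a i * (u j w) - a j * (u i w) ≤ a i * c j - a j * c i := fun i j hi hj => by
        simpa [f, d] using hw (Sum.inr (⟨i, hi⟩, ⟨j, hj⟩))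
      set g : Fin m → ℝ := fun i => (c i - u i w) / a i with hg
      have hgb : ∀ i j, 0 < a i → a j < 0 → g j ≤ g i := fun i j hi hj =>
        fmDivHelper hi hj (hpair i j hi hj)
      have sat : ∀ t : ℝ, (∀ i, a i < 0 → g i ≤ t) → (∀ i, 0 < a i → t ≤ g i) →
          ∀ i, a i * t + u i w ≤ c i := by
        intro t h1 h2 i
        rcases lt_trichotomy (a i) 0 with h | h | h
        · have := (div_le_iff_of_neg h).mp (h1 i h)
          nlinarith
        · have := hzero i h
          simp [h]
          linarith
        · have := (le_div_iff₀ h).mp (h2 i h)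
          nlinarith
      have main : ∃ t : ℝ, ∀ i, a i * t + u i w ≤ c i := by
        by_cases hlow : (Finset.univ.filter fun i => a i < 0).Nonempty
        · refine ⟨(Finset.univ.filter fun i => a i < 0).sup' hlow g, sat _ ?_ ?_⟩
          · intro i hi
            exact Finset.le_sup' g (by simp [hi])
          · intro i hi
            refine Finset.sup'_le _ _ fun j hj => hgb i j hi ?_
            simpa using (Finset.mem_filter.mp hj).2
        · by_cases hupp : (Finset.univ.filter fun i => 0 < a i).Nonempty
          · refine ⟨(Finset.univ.filter fun i => 0 < a i).inf' hupp g, sat _ ?_ ?_⟩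
            · intro i hi
              exact absurd ⟨i, by simp [hi]⟩ hlow
            · intro i hi
              exact Finset.inf'_le g (by simp [hi])
          · exact ⟨0, sat 0 (fun i hi => absurd ⟨i, by simp [hi]⟩ hlow)
              (fun i hi => absurd ⟨i, by simp [hi]⟩ hupp)⟩
      obtain ⟨t, ht⟩ := main
      exact ⟨(t, w), Set.mem_iInter.mpr fun i => ht i, rfl⟩
  rw [key]
  exact isPolyhedron_iInter f d

lemma IsPolyhedron.image_snd {U : Type*} [AddCommGroup U] [Module ℝ U]
    {P : Set (ℝ × U)} (hP : IsPolyhedron P) : IsPolyhedron (Prod.snd '' P) := by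
  obtain ⟨m, u, c, rfl⟩ := hP
  have key : ∀ (i : Fin m) (t : ℝ) (w : U),
      u i (t, w) = u i (1, 0) * t + ((u i).comp (LinearMap.inr ℝ ℝ U)) w := by
    intro i t w
    have he : ((t, w) : ℝ × U) = t • ((1 : ℝ), (0 : U)) + ((0 : ℝ), w) := by
      simp [Prod.ext_iff]
    rw [he, map_add, map_smul, smul_eq_mul, mul_comm]
    simp [LinearMap.comp_apply]
  have hset : (⋂ i, {p : ℝ × U | u i p ≤ c i})
      = ⋂ i, {p : ℝ × U | (u i (1, 0)) * p.1 + ((u i).comp (LinearMap.inr ℝ ℝ U)) p.2 ≤ c i} := by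
    refine Set.iInter_congr fun i => ?_
    ext ⟨t, w⟩
    simp only [Set.mem_setOf_eq, key i t w]
  rw [hset]
  exact fm m _ _ c

lemma IsPolyhedron.isClosed {V : Type*} [NormedAddCommGroup V] [NormedSpace ℝ V]
    [FiniteDimensional ℝ V] {P : Set V} (hP : IsPolyhedron P) : IsClosed P := by
  obtain ⟨m, u, c, rfl⟩ := hP
  exact isClosed_iInter fun i =>
    IsClosed.preimage (u i).continuous_of_finiteDimensional isClosed_Iic

lemma aux_image_polyhedron : ∀ (n : ℕ) (V : Type u) [NormedAddCommGroup V] [NormedSpace ℝ V]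
    [FiniteDimensional ℝ V] (W : Type v) [AddCommGroup W] [Module ℝ W]
    (π : V →ₗ[ℝ] W), Function.Surjective π → Module.finrank ℝ V ≤ n →
    ∀ P : Set V, IsPolyhedron P → IsPolyhedron (π '' P) := by
  intro n
  induction n with
  | zero =>
    intro V _ _ _ W _ _ π hπ hr P hP
    haveI : Subsingleton V := Module.finrank_zero_iff.mp (Nat.le_zero.mp hr)
    have hinj : Function.Injective π := fun a b _ => Subsingleton.elim a b
    have := hP.image_equiv (LinearEquiv.ofBijective π ⟨hinj, hπ⟩)
    exact this
  | succ n ih =>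
    intro V _ _ _ W _ _ π hπ hr P hP
    by_cases hk : LinearMap.ker π = ⊥
    · have := hP.image_equiv (LinearEquiv.ofBijective π ⟨LinearMap.ker_eq_bot.mp hk, hπ⟩)
      exact this
    · obtain ⟨x, hxk, hx0⟩ := (Submodule.ne_bot_iff _).mp hk
      obtain ⟨U, hU⟩ := Submodule.exists_isCompl (Submodule.span ℝ {x})
      set L := Submodule.span ℝ {x} with hL
      let e : (L × U) ≃ₗ[ℝ] V := Submodule.prodEquivOfIsCompl L U hU
      let el : ℝ ≃ₗ[ℝ] L := LinearEquiv.toSpanNonzeroSingleton ℝ V x hx0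
      let f : (ℝ × U) ≃ₗ[ℝ] V := (el.prodCongr (LinearEquiv.refl ℝ U)).trans e
      let π₂ : U →ₗ[ℝ] W := π.comp U.subtype
      have hcomm : ∀ p : ℝ × U, π (f p) = π₂ p.2 := by
        rintro ⟨t, v⟩
        show π (e (el t, v)) = π v
        have he : e (el t, v) = (el t : V) + (v : V) :=
          Submodule.coe_prodEquivOfIsCompl' L U hU (el t, v)
        rw [he, map_add]
        have hker : ((el t : V)) ∈ LinearMap.ker π := by
          have het : (el t : V) = t • x := by
            rw [show el t = (LinearEquiv.toSpanNonzeroSingleton ℝ V x hx0) t from rfl,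
              LinearEquiv.toSpanNonzeroSingleton_apply]
          rw [het]
          exact Submodule.smul_mem _ _ hxk
        rw [LinearMap.mem_ker.mp hker, zero_add]
      have himg : π '' P = π₂ '' (Prod.snd '' (⇑f.symm '' P)) := by
        rw [Set.image_image, Set.image_image]
        refine Set.image_congr fun v _ => ?_
        rw [← hcomm (f.symm v), f.apply_symm_apply]
      rw [himg]
      have hπ₂ : Function.Surjective π₂ := by
        intro w2
        obtain ⟨v, rfl⟩ := hπ w2
        refine ⟨(f.symm v).2, ?_⟩
        rw [← hcomm (f.symm v), f.apply_symm_apply]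
      have hrank : Module.finrank ℝ U ≤ n := by
        have h1 := Submodule.finrank_add_eq_of_isCompl hU
        have hL1 : Module.finrank ℝ L = 1 := finrank_span_singleton hx0
        omega
      exact ih U W π₂ hπ₂ hrank _ (hP.image_equiv f.symm).image_snd

/-- The image of a polyhedron under a surjective linear map of finite-dimensional real
vector spaces is a polyhedron; in particular it is closed. -/
theorem image_polyhedron {V W : Type*} [NormedAddCommGroup V] [NormedSpace ℝ V]
    [FiniteDimensional ℝ V] [NormedAddCommGroup W] [NormedSpace ℝ W]
    [FiniteDimensional ℝ W] (π : V →ₗ[ℝ] W) (hπ : Function.Surjective π)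
    (P : Set V) (hP : IsPolyhedron P) :
    IsPolyhedron (π '' P) ∧ IsClosed (π '' P) := by
  have h1 : IsPolyhedron (π '' P) :=
    aux_image_polyhedron (Module.finrank ℝ V) V W π hπ le_rfl P hP
  exact ⟨h1, h1.isClosed⟩
end

section
/- Let 𝒫 be a continuous family of polyhedra in a finite-dimensional real vector space V parameterized by [a,b]. Then the set {t ∈ [a,b] : 𝒫(t) ≠ ∅} is a closed subset of [a,b]. -/
open Finset

/-- Carathéodory for cones: a nonnegative combination over `s` can be rewritten as a
nonnegative combination over a linearly independent subset of `s`. -/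
lemma cone_caratheodory {E : Type*} [AddCommGroup E] [Module ℝ E] {ι : Type*} [Fintype ι]
    [DecidableEq ι] (g : ι → E) (s : Finset ι) (l : ι → ℝ) (hl : ∀ i, 0 ≤ l i) :
    ∃ t ⊆ s, LinearIndependent ℝ (fun i : t => g i) ∧
      ∃ μ : ι → ℝ, (∀ i, 0 ≤ μ i) ∧ ∑ i ∈ t, μ i • g i = ∑ i ∈ s, l i • g i := by
  induction s using Finset.strongInductionOn generalizing l with
  | _ s ih =>
  by_cases hind : LinearIndependent ℝ (fun i : s => g i)
  · exact ⟨s, Finset.Subset.refl s, hind, l, hl, rfl⟩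
  · obtain ⟨c, hc0, j, hcj⟩ := Fintype.not_linearIndependent_iff.mp hind
    set c' : ι → ℝ := fun i => if h : i ∈ s then c ⟨i, h⟩ else 0 with hc'
    have hc'out : ∀ i ∉ s, c' i = 0 := fun i hi => dif_neg hi
    have hc'sum : ∑ i ∈ s, c' i • g i = 0 := by
      rw [← Finset.sum_coe_sort s (fun i => c' i • g i)]
      rw [← hc0]
      refine Finset.sum_congr rfl fun i _ => ?_
      simp [hc', dif_pos i.2]
    have hc'j : c' (j : ι) ≠ 0 := by simpa [hc', dif_pos j.2] using hcj
    suffices h : ∀ d : ι → ℝ, (∀ i ∉ s, d i = 0) → (∑ i ∈ s, d i • g i = 0) →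
        (∃ j ∈ s, 0 < d j) →
        ∃ t ⊆ s, LinearIndependent ℝ (fun i : t => g i) ∧
          ∃ μ : ι → ℝ, (∀ i, 0 ≤ μ i) ∧ ∑ i ∈ t, μ i • g i = ∑ i ∈ s, l i • g i by
      rcases hc'j.lt_or_gt with hneg | hpos
      · refine h (fun i => -c' i) (fun i hi => by simp [hc'out i hi]) ?_ ⟨j, j.2, show (0:ℝ) < -c' ↑j from neg_pos.mpr hneg⟩
        simp only [neg_smul, Finset.sum_neg_distrib]
        rw [hc'sum, neg_zero]
      · exact h c' hc'out hc'sum ⟨j, j.2, hpos⟩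
    intro d hdout hdsum ⟨j₀, hj₀s, hj₀⟩
    set T : Finset ι := s.filter (fun i => 0 < d i) with hT
    have hTne : T.Nonempty := ⟨j₀, Finset.mem_filter.mpr ⟨hj₀s, hj₀⟩⟩
    set θ : ℝ := T.inf' hTne (fun i => l i / d i) with hθdef
    obtain ⟨i₀, hi₀T, hθeq⟩ := Finset.exists_mem_eq_inf' hTne (fun i => l i / d i)
    have hi₀s : i₀ ∈ s := (Finset.mem_filter.mp hi₀T).1
    have hdi₀ : 0 < d i₀ := (Finset.mem_filter.mp hi₀T).2
    have hθ0 : 0 ≤ θ := by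
      rw [hθdef, hθeq]
      exact div_nonneg (hl i₀) hdi₀.le
    set μ : ι → ℝ := fun i => l i - θ * d i with hμdef
    have hμ : ∀ i, 0 ≤ μ i := by
      intro i
      by_cases hi : i ∈ s
      · by_cases hdi : 0 < d i
        · have hiT : i ∈ T := Finset.mem_filter.mpr ⟨hi, hdi⟩
          have := Finset.inf'_le (fun i => l i / d i) hiT
          have : θ * d i ≤ l i := by
            rw [← le_div_iff₀ hdi]; exact this
          simp only [hμdef]; linarith
        · push_neg at hdi
          have : θ * d i ≤ 0 := mul_nonpos_of_nonneg_of_nonpos hθ0 hdi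
          have := hl i
          simp only [hμdef]; linarith
      · simp only [hμdef, hdout i hi, mul_zero, sub_zero]; exact hl i
    have hμi₀ : μ i₀ = 0 := by
      simp only [hμdef]
      rw [hθdef, hθeq, div_mul_cancel₀ _ hdi₀.ne', sub_self]
    have hμsum : ∑ i ∈ s, μ i • g i = ∑ i ∈ s, l i • g i := by
      simp only [hμdef, sub_smul, Finset.sum_sub_distrib, mul_smul]
      rw [← Finset.smul_sum, hdsum, smul_zero, sub_zero]
    obtain ⟨t, hts, hind', ν, hν, hνsum⟩ := ih (s.erase i₀) (Finset.erase_ssubset hi₀s) μ hμ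
    refine ⟨t, hts.trans (Finset.erase_subset _ _), hind', ν, hν, ?_⟩
    rw [hνsum, Finset.sum_erase _ (by rw [hμi₀, zero_smul]), hμsum]

/-- The cone generated by finitely many vectors in a finite-dimensional normed real
vector space is closed. -/
lemma isClosed_coneSet {E : Type*} [NormedAddCommGroup E] [NormedSpace ℝ E]
    {ι : Type*} [Fintype ι] [DecidableEq ι] (g : ι → E) :
    IsClosed {x : E | ∃ l : ι → ℝ, (∀ i, 0 ≤ l i) ∧ ∑ i, l i • g i = x} := by
  have key : {x : E | ∃ l : ι → ℝ, (∀ i, 0 ≤ l i) ∧ ∑ i, l i • g i = x} =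
      ⋃ t : {t : Finset ι // LinearIndependent ℝ (fun i : t => g i)},
        {x : E | ∃ l : ι → ℝ, (∀ i, 0 ≤ l i) ∧ ∑ i ∈ t.1, l i • g i = x} := by
    ext x
    constructor
    · rintro ⟨l, hl, hsum⟩
      obtain ⟨t, -, hind, μ, hμ, hμsum⟩ := cone_caratheodory g Finset.univ l hl
      exact Set.mem_iUnion.mpr ⟨⟨t, hind⟩, μ, hμ, by rw [hμsum]; exact hsum⟩
    · rintro h
      obtain ⟨⟨t, hind⟩, l, hl, hsum⟩ := Set.mem_iUnion.mp h
      refine ⟨fun i => if i ∈ t then l i else 0,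
        fun i => by by_cases h : i ∈ t <;> simp [h, hl i], ?_⟩
      rw [← hsum]
      rw [← Finset.sum_filter_add_sum_filter_not Finset.univ (· ∈ t)]
      have h1 : ∀ i ∈ Finset.univ.filter (· ∉ t),
          (if i ∈ t then l i else 0) • g i = 0 := by
        intro i hi
        simp [Finset.mem_filter.mp hi |>.2]
      rw [Finset.sum_congr rfl h1, Finset.sum_const_zero, add_zero]
      rw [Finset.filter_mem_eq_inter, Finset.univ_inter]
      exact Finset.sum_congr rfl fun i hi => by simp [hi]
  rw [key]
  apply isClosed_iUnion_of_finite
  rintro ⟨t, hind⟩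
  -- the linear map sending coefficients to the combination
  let L : (t → ℝ) →ₗ[ℝ] E :=
    { toFun := fun l => ∑ i : t, l i • g i
      map_add' := by intro x y; simp [add_smul, Finset.sum_add_distrib]
      map_smul' := by intro c x; simp [mul_smul, Finset.smul_sum] }
  have hker : LinearMap.ker L = ⊥ := by
    rw [LinearMap.ker_eq_bot']
    intro l hLl
    exact funext (Fintype.linearIndependent_iff.mp hind l hLl)
  have hemb := LinearMap.isClosedEmbedding_of_injective hker
  have himg : {x : E | ∃ l : ι → ℝ, (∀ i, 0 ≤ l i) ∧ ∑ i ∈ t, l i • g i = x} =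
      L '' {l : t → ℝ | ∀ i, 0 ≤ l i} := by
    ext x
    constructor
    · rintro ⟨l, hl, hsum⟩
      refine ⟨fun i => l i, fun i => hl i, ?_⟩
      show ∑ i : t, l i • g i = x
      rw [Finset.sum_coe_sort t (fun i => l i • g i)]
      exact hsum
    · rintro ⟨l, hl, rfl⟩
      refine ⟨fun i => if h : i ∈ t then l ⟨i, h⟩ else 0, fun i => ?_, ?_⟩
      · by_cases h : i ∈ t
        · simpa [h] using hl ⟨i, h⟩
        · simp [h]
      · show _ = ∑ i : t, l i • g i
        rw [← Finset.sum_coe_sort t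
          (fun i => (if h : i ∈ t then l ⟨i, h⟩ else 0) • g i)]
        exact Finset.sum_congr rfl fun i _ => by rw [dif_pos i.2]
  rw [himg]
  apply hemb.isClosedMap
  have : {l : t → ℝ | ∀ i, 0 ≤ l i} = ⋂ i, {l : t → ℝ | 0 ≤ l i} := by
    ext l; simp [Set.mem_iInter]
  rw [this]
  exact isClosed_iInter fun i => isClosed_le continuous_const (continuous_apply i)

/-- For a continuous family of polyhedra parameterized by `[a, b]`, the set of parameters `t`
for which the polyhedron is nonempty is a closed subset of `[a, b]`. -/
theorem contFamily_nonempty_closed {V : Type*} [AddCommGroup V] [Module ℝ V]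
    [FiniteDimensional ℝ V] (a b : ℝ) (hab : a ≤ b) (F : ℝ → Set V)
    (hF : IsContFamilyOfPolyhedra a b F) :
    IsClosed {t | t ∈ Set.Icc a b ∧ (F t).Nonempty} := by
  classical
  obtain ⟨m, u, f, hfc, hP⟩ := hF
  set n := Module.finrank ℝ V with hn
  set bV : Module.Basis (Fin n) ℝ V := Module.finBasis ℝ V with hbV
  set A : V →ₗ[ℝ] (Fin m → ℝ) := LinearMap.pi u with hA
  have hAapp : ∀ (v : V) (i : Fin m), A v i = u i v := fun v i => rfl
  set g : (Fin n ⊕ Fin n) ⊕ Fin m → (Fin m → ℝ) :=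
    Sum.elim (Sum.elim (fun j => A (bV j)) (fun j => -A (bV j)))
      (fun i => Pi.single i 1) with hg
  set S : Set (Fin m → ℝ) := {x | ∃ l : ((Fin n ⊕ Fin n) ⊕ Fin m) → ℝ, (∀ i, 0 ≤ l i) ∧ ∑ i, l i • g i = x} with hS
  have hSclosed : IsClosed S := isClosed_coneSet g
  have hsingle : ∀ x : Fin m → ℝ, ∑ i, x i • (Pi.single i 1 : Fin m → ℝ) = x := by
    intro x
    have h1 : ∀ i : Fin m, x i • (Pi.single i 1 : Fin m → ℝ) = Pi.single i (x i) := by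
      intro i
      rw [← Pi.single_smul, smul_eq_mul, mul_one]
    simp_rw [h1]
    exact Finset.univ_sum_single x
  have hsum_g : ∀ l : ((Fin n ⊕ Fin n) ⊕ Fin m) → ℝ,
      ∑ i, l i • g i
        = A (∑ j, (l (.inl (.inl j)) - l (.inl (.inr j))) • bV j)
          + ∑ i, l (.inr i) • (Pi.single i 1 : Fin m → ℝ) := by
    intro l
    rw [Fintype.sum_sum_type, Fintype.sum_sum_type, map_sum]
    congr 1
    rw [← Finset.sum_add_distrib]
    refine Finset.sum_congr rfl fun j _ => ?_
    rw [map_smul]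
    simp only [hg, Sum.elim_inl, Sum.elim_inr]
    rw [sub_smul, smul_neg, sub_eq_add_neg]
  have hmem : ∀ c : Fin m → ℝ, (c ∈ S ↔ ∃ v : V, ∀ i, u i v ≤ c i) := by
    intro c
    constructor
    · rintro ⟨l, hl, hsum⟩
      set v : V := ∑ j, (l (.inl (.inl j)) - l (.inl (.inr j))) • bV j with hv
      refine ⟨v, fun i => ?_⟩
      have hY : (∑ i' : Fin m, l (Sum.inr i') • (Pi.single i' 1 : Fin m → ℝ))
          = fun i' => l (Sum.inr i') := hsingle _
      have hc : c i = A v i + l (Sum.inr i) := by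
        rw [← hsum, hsum_g l, hY, Pi.add_apply]
      rw [← hAapp v i, hc]
      have := hl (Sum.inr i)
      linarith
    · rintro ⟨v, hv⟩
      refine ⟨Sum.elim (Sum.elim (fun j => max (bV.repr v j) 0)
          (fun j => max (-(bV.repr v j)) 0)) (fun i => c i - u i v), ?_, ?_⟩
      · rintro ((j | j) | i)
        · exact le_max_right _ _
        · exact le_max_right _ _
        · exact sub_nonneg.mpr (hv i)
      · rw [hsum_g]
        simp only [Sum.elim_inl, Sum.elim_inr]
        have h2 : ∀ j : Fin n,
            (max (bV.repr v j) 0 - max (-(bV.repr v j)) 0) = bV.repr v j := fun j =>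
          max_zero_sub_max_neg_zero_eq_self _
        simp_rw [h2, Module.Basis.sum_repr]
        rw [hsingle (fun i => c i - u i v)]
        funext k
        rw [Pi.add_apply, hAapp]
        ring
  have key : {t | t ∈ Set.Icc a b ∧ (F t).Nonempty}
      = Set.Icc a b ∩ (fun t => fun i => f i t) ⁻¹' S := by
    ext t
    simp only [Set.mem_inter_iff, Set.mem_setOf_eq, Set.mem_preimage]
    constructor
    · rintro ⟨ht, v, hvF⟩
      refine ⟨ht, (hmem _).mpr ⟨v, fun i => ?_⟩⟩
      rw [hP t ht] at hvF
      exact Set.mem_iInter.mp hvF i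
    · rintro ⟨ht, hc⟩
      obtain ⟨v, hv⟩ := (hmem _).mp hc
      refine ⟨ht, v, ?_⟩
      rw [hP t ht]
      exact Set.mem_iInter.mpr hv
  rw [key]
  exact ContinuousOn.preimage_isClosed_of_isClosed
    (continuousOn_pi.mpr hfc) isClosed_Icc hSclosed
end

section
/- Let P and P' be polyhedra in ℝ^n and let σ ⊆ ℝ^n be a polyhedral cone such that σ ⊆ ρ(P) and relint(σ) ∩ ρ(P') ≠ ∅, where relint denotes relative interior. Let π_σ : ℝ^n → ℝ^n/span(σ) be the quotient map modulo the linear span of σ. Then π_σ(P) ∩ π_σ(P') = π_σ(P ∩ P'). -/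
open Set

/-- A polyhedral cone: a finite intersection of halfspaces `{v : ⟨uᵢ, v⟩ ≤ 0}`. -/
def IsPolyCone {V : Type*} [AddCommGroup V] [Module ℝ V] (σ : Set V) : Prop :=
  ∃ (m : ℕ) (u : Fin m → (V →ₗ[ℝ] ℝ)), σ = ⋂ i, {v : V | u i v ≤ 0}

lemma cone_absorb {n : ℕ} (σ : Set (Fin n → ℝ)) (hσ : IsPolyCone σ)
    (w : Fin n → ℝ) (hw : w ∈ intrinsicInterior ℝ σ)
    (z : Fin n → ℝ) (hz : z ∈ Submodule.span ℝ σ) :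
    ∃ t : ℕ, (t : ℝ) • w + z ∈ σ := by
  obtain ⟨m, u, rfl⟩ := hσ
  set S : Set (Fin n → ℝ) := ⋂ i, {v | u i v ≤ 0} with hS
  have hwS : w ∈ S := intrinsicInterior_subset hw
  have hwle : ∀ i, u i w ≤ 0 := by
    intro i; exact mem_iInter.mp hwS i
  have hvan : ∀ i, ¬ (u i w < 0) → ∀ v ∈ S, u i v = 0 := by
    intro i hi v hv
    have hw0 : u i w = 0 := le_antisymm (hwle i) (not_lt.mp hi)
    by_contra hne
    have hvneg : u i v < 0 := lt_of_le_of_ne (mem_iInter.mp hv i) hne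
    obtain ⟨w', hw'int, hw'eq⟩ := hw
    have hwmem : w ∈ affineSpan ℝ S := subset_affineSpan ℝ _ hwS
    have hvmem : v ∈ affineSpan ℝ S := subset_affineSpan ℝ _ hv
    set g : ℝ → (affineSpan ℝ S : Set (Fin n → ℝ)) :=
      fun t => ⟨t • (w - v) + w, by
        have := (affineSpan ℝ S).smul_vsub_vadd_mem t hwmem hvmem hwmem
        simpa using this⟩ with hg
    have hgc : Continuous g := by
      apply Continuous.subtype_mk
      exact (continuous_id.smul continuous_const).add continuous_const
    have hg0 : g 0 = w' := by
      apply Subtype.ext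
      simp [hg, hw'eq]
    have hmemnhds : g ⁻¹' (interior ((↑) ⁻¹' S)) ∈ nhds (0 : ℝ) := by
      apply (isOpen_interior.preimage hgc).mem_nhds
      rw [Set.mem_preimage, hg0]; exact hw'int
    obtain ⟨δ, hδpos, hδ⟩ := Metric.mem_nhds_iff.mp hmemnhds
    have hball : (δ/2 : ℝ) ∈ Metric.ball (0:ℝ) δ := by
      rw [Metric.mem_ball, dist_zero_right, Real.norm_eq_abs,
        abs_of_pos (by linarith : (0:ℝ) < δ/2)]
      linarith
    have hg2 : g (δ/2) ∈ interior (Subtype.val ⁻¹' S) := hδ hball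
    have hg3 : g (δ/2) ∈ Subtype.val ⁻¹' S := interior_subset hg2
    have hgin : ((δ/2 : ℝ) • (w - v) + w) ∈ S := hg3
    have : u i ((δ/2) • (w - v) + w) ≤ 0 := mem_iInter.mp hgin i
    rw [map_add, map_smul] at this
    simp only [map_sub, hw0, smul_eq_mul] at this
    nlinarith
  have hz0 : ∀ i, ¬ (u i w < 0) → u i z = 0 := by
    intro i hi
    have hle : Submodule.span ℝ S ≤ LinearMap.ker (u i) := by
      rw [Submodule.span_le]
      intro v hv
      exact hvan i hi v hv
    exact hle hz
  obtain ⟨t, ht⟩ := exists_nat_ge (∑ i : Fin m, max 0 ((u i z) / (-(u i w))))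
  refine ⟨t, ?_⟩
  rw [hS, mem_iInter]
  intro i
  simp only [mem_setOf_eq, map_add, map_smul, smul_eq_mul]
  by_cases hi : u i w < 0
  · have hsum : max 0 ((u i z) / (-(u i w))) ≤ ∑ j : Fin m, max 0 ((u j z) / (-(u j w))) :=
      Finset.single_le_sum (f := fun j => max 0 ((u j z) / (-(u j w)))) (fun j _ => le_max_left _ _) (Finset.mem_univ i)
    have hdiv : (u i z) / (-(u i w)) ≤ (t : ℝ) := le_trans (le_trans (le_max_right _ _) hsum) ht
    have hpos : (0:ℝ) < -(u i w) := by linarith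
    have := (div_le_iff₀ hpos).mp hdiv
    nlinarith
  · have h1 := le_antisymm (hwle i) (not_lt.mp hi)
    rw [h1, hz0 i hi]; simp

lemma rec_nsmul {V : Type*} [AddCommGroup V] [Module ℝ V] {P : Set V} {w : V}
    (hw : w ∈ recCone P) : ∀ (t : ℕ), ∀ v ∈ P, v + (t : ℝ) • w ∈ P := by
  intro t
  induction t with
  | zero => intro v hv; simpa using hv
  | succ k ih =>
      intro v hv
      have : v + ((k : ℝ) + 1) • w = (v + (k : ℝ) • w) + w := by
        rw [add_smul, one_smul]; abel
      rw [Nat.cast_succ, this]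
      exact hw _ (ih v hv)

/-- If `P, P'` are polyhedra in `ℝⁿ` and `σ` is a polyhedral cone with `σ ⊆ ρ(P)` and
`relint(σ) ∩ ρ(P') ≠ ∅`, then for the projection `π_σ : ℝⁿ → ℝⁿ/span(σ)` one has
`π_σ(P) ∩ π_σ(P') = π_σ(P ∩ P')`. -/
theorem image_inter_quotient {n : ℕ} (P P' σ : Set (Fin n → ℝ))
    (hP : IsPolyhedron P) (hP' : IsPolyhedron P') (hσ : IsPolyCone σ)
    (h1 : σ ⊆ recCone P)
    (h2 : (intrinsicInterior ℝ σ ∩ recCone P').Nonempty) :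
    ((Submodule.span ℝ σ).mkQ '' P) ∩ ((Submodule.span ℝ σ).mkQ '' P') =
      (Submodule.span ℝ σ).mkQ '' (P ∩ P') := by

  refine Subset.antisymm ?_ (Set.image_inter_subset _ _ _)
  rintro q ⟨⟨x, hx, rfl⟩, ⟨x', hx', hx'q⟩⟩
  have hmem : x' - x ∈ Submodule.span ℝ σ := by
    have := hx'q
    rw [Submodule.mkQ_apply, Submodule.mkQ_apply, Submodule.Quotient.eq] at this
    exact this
  obtain ⟨w, hwint, hwrec⟩ := h2
  obtain ⟨t, ht⟩ := cone_absorb σ hσ w hwint _ hmem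
  have hwσ : w ∈ σ := intrinsicInterior_subset hwint
  refine ⟨x + ((t : ℝ) • w + (x' - x)), ⟨h1 ht x hx, ?_⟩, ?_⟩
  · have heq : x + ((t : ℝ) • w + (x' - x)) = x' + (t : ℝ) • w := by abel
    rw [heq]
    exact rec_nsmul hwrec t x' hx'
  · rw [Submodule.mkQ_apply, Submodule.mkQ_apply, Submodule.Quotient.eq]
    have heq : x + ((t : ℝ) • w + (x' - x)) - x = (t : ℝ) • w + (x' - x) := by abel
    rw [heq]
    exact Submodule.add_mem _
      (Submodule.smul_mem _ _ (Submodule.subset_span hwσ)) hmem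
end

section
/- Let σ₀ ⊆ ℝ^n be a pointed polyhedral cone, and let 𝒫 and 𝒫' be finite collections of polyhedra in ℝ^n. Suppose that for every P ∈ 𝒫 and every face τ of σ₀, either τ ⊆ ρ(P) or relint(τ) ∩ ρ(P) = ∅. Then, taking closures in N_ℝ(σ₀) and writing |𝒫| = ⋃_{P∈𝒫} P, one has closure(ι(|𝒫| ∩ |𝒫'|)) = closure(ι(|𝒫|)) ∩ closure(ι(|𝒫'|)). -/
open Set Pointwise

/-- A set is pointed if it contains no nonzero linear subspace. -/
def IsPointedSet {V : Type*} [AddCommGroup V] [Module ℝ V] (σ : Set V) : Prop :=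
  ∀ W : Submodule ℝ V, (W : Set V) ⊆ σ → W = ⊥

/-- `F` is a face of the polyhedral cone `σ`. -/
def IsFaceOfCone {V : Type*} [AddCommGroup V] [Module ℝ V] (σ F : Set V) : Prop :=
  ∃ u : V →ₗ[ℝ] ℝ, (∀ x ∈ σ, u x ≤ 0) ∧ F = {x ∈ σ | u x = 0}

/-- The dual cone `σ^∨ = {u : ⟨u, v⟩ ≤ 0 for all v ∈ σ}` inside the dual space. -/
def dualCone {n : ℕ} (σ : Set (Fin n → ℝ)) : Set ((Fin n → ℝ) →ₗ[ℝ] ℝ) :=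
  {u | ∀ v ∈ σ, u v ≤ 0}

/-- The canonical map `ι : ℝⁿ → (σ₀^∨ → ℝ ∪ {-∞})`, `ι(v)(u) = ⟨u, v⟩`; the target carries
the topology of pointwise convergence. -/
def iotaTrop {n : ℕ} (σ₀ : Set (Fin n → ℝ)) (v : Fin n → ℝ) :
    ↥(dualCone σ₀) → EReal :=
  fun u => ((u.1 v : ℝ) : EReal)

/-- The extended tropicalization `N_ℝ(σ₀)`: the set of monoid homomorphisms
`h : σ₀^∨ → ℝ ∪ {-∞}` with `h(0) = 0`, `h(u + u') = h(u) + h(u')` and `h(r • u) = r·h(u)`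
for `r > 0`, realized as the `EReal`-valued functions on `σ₀^∨` never taking the value `+∞`. -/
def NRext {n : ℕ} (σ₀ : Set (Fin n → ℝ)) : Set (↥(dualCone σ₀) → EReal) :=
  {h | (∀ u, h u ≠ ⊤) ∧
       (∀ u : ↥(dualCone σ₀), (u : (Fin n → ℝ) →ₗ[ℝ] ℝ) = 0 → h u = 0) ∧
       (∀ u u' s : ↥(dualCone σ₀),
         (s : (Fin n → ℝ) →ₗ[ℝ] ℝ) = (u : (Fin n → ℝ) →ₗ[ℝ] ℝ) + (u' : (Fin n → ℝ) →ₗ[ℝ] ℝ) →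
           h s = h u + h u') ∧
       (∀ r : ℝ, 0 < r → ∀ u s : ↥(dualCone σ₀),
         (s : (Fin n → ℝ) →ₗ[ℝ] ℝ) = r • (u : (Fin n → ℝ) →ₗ[ℝ] ℝ) →
           h s = (r : EReal) * h u)}



open Set Finset Filter Topology

private lemma sum_single_smul {ι : Type} [Fintype ι] [DecidableEq ι] {M : Type}
    [AddCommMonoid M] [Module ℝ M] (r₀ : ι) (v : ι → M) :
    (∑ r, (Pi.single r₀ 1 : ι → ℝ) r • v r) = v r₀ := by
  rw [Finset.sum_eq_single r₀]
  · simp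
  · intro r' _ hne
    rw [Pi.single_eq_of_ne hne]
    simp
  · intro h; exact absurd (Finset.mem_univ r₀) h

private theorem fm_core_s11 (n : ℕ) : ∀ (ι : Type) [Fintype ι] (a : ι → Fin n → ℝ) (b : ι → ℝ),
    (∀ y : ι → ℝ, (∀ r, 0 ≤ y r) → (∑ r, y r • a r) = 0 → 0 ≤ ∑ r, y r * b r) →
    ∃ x : Fin n → ℝ, ∀ r, (∑ i, a r i * x i) ≤ b r := by
  induction n with
  | zero =>
    intro ι _ a b hyp
    refine ⟨fun _ => 0, fun r => ?_⟩
    classical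
    have h0 : (0:ℝ) ≤ ∑ r', (Pi.single r 1 : ι → ℝ) r' * b r' := by
      apply hyp
      · intro r'
        rcases eq_or_ne r' r with h | h
        · subst h; simp
        · rw [Pi.single_eq_of_ne h]
      · funext i; exact i.elim0
    have h1 : (∑ r', (Pi.single r 1 : ι → ℝ) r' * b r') = b r := by
      have := sum_single_smul (M := ℝ) r b
      simpa [smul_eq_mul] using this
    rw [h1] at h0
    simpa using h0
  | succ n IH =>
    intro ι _ a b hyp
    classical
    set α : ι → ℝ := fun r => a r (Fin.last n) with hα
    set a' : ι → Fin n → ℝ := fun r => fun i => a r i.castSucc with ha'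
    set aN : ι ⊕ ι × ι → Fin n → ℝ := fun t =>
      Sum.rec (fun r => if α r = 0 then a' r else 0)
        (fun p => if 0 < α p.1 ∧ α p.2 < 0 then (-α p.2) • a' p.1 + (α p.1) • a' p.2 else 0) t
      with haN
    set bN : ι ⊕ ι × ι → ℝ := fun t =>
      Sum.rec (fun r => if α r = 0 then b r else 0)
        (fun p => if 0 < α p.1 ∧ α p.2 < 0 then (-α p.2) * b p.1 + (α p.1) * b p.2 else 0) t
      with hbN
    set Y : ι ⊕ ι × ι → ι → ℝ := fun t =>
      Sum.rec (fun r => if α r = 0 then Pi.single r (1:ℝ) else 0)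
        (fun p => if 0 < α p.1 ∧ α p.2 < 0 then
          (-α p.2) • (Pi.single p.1 1 : ι → ℝ) + (α p.1) • (Pi.single p.2 1 : ι → ℝ) else 0) t
      with hY
    have hY0 : ∀ t r, 0 ≤ Y t r := by
      rintro (r₀ | ⟨p, q⟩) r
      · by_cases h : α r₀ = 0
        · simp only [hY, h, if_pos]
          rcases eq_or_ne r r₀ with h' | h'
          · subst h'; simp
          · rw [Pi.single_eq_of_ne h']
        · simp [hY, h]
      · by_cases h : 0 < α p ∧ α q < 0
        · simp only [hY, if_pos h, Pi.add_apply, Pi.smul_apply, smul_eq_mul]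
          have h1 : (0:ℝ) ≤ (Pi.single p 1 : ι → ℝ) r := by
            rcases eq_or_ne r p with h' | h'
            · subst h'; simp
            · rw [Pi.single_eq_of_ne h']
          have h2 : (0:ℝ) ≤ (Pi.single q 1 : ι → ℝ) r := by
            rcases eq_or_ne r q with h' | h'
            · subst h'; simp
            · rw [Pi.single_eq_of_ne h']
          nlinarith [h.1, h.2]
        · simp [hY, h]
    -- generic smul expansion over sums
    have hsum2 : ∀ (c₁ c₂ : ℝ) (p q : ι) {M : Type} (_ : AddCommMonoid M) (_ : Module ℝ M)
        (v : ι → M), (∑ r, (c₁ • (Pi.single p 1 : ι → ℝ) + c₂ • (Pi.single q 1 : ι → ℝ)) r • v r)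
          = c₁ • v p + c₂ • v q := by
      intro c₁ c₂ p q M _ _ v
      have : ∀ r, (c₁ • (Pi.single p 1 : ι → ℝ) + c₂ • (Pi.single q 1 : ι → ℝ)) r • v r
          = c₁ • ((Pi.single p 1 : ι → ℝ) r • v r) + c₂ • ((Pi.single q 1 : ι → ℝ) r • v r) := by
        intro r
        simp only [Pi.add_apply, Pi.smul_apply, smul_eq_mul, add_smul, mul_smul]
      rw [Finset.sum_congr rfl (fun r _ => this r), Finset.sum_add_distrib,
        ← Finset.smul_sum, ← Finset.smul_sum, sum_single_smul, sum_single_smul]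
    have hYa' : ∀ t, (∑ r, Y t r • a' r) = aN t := by
      rintro (r₀ | ⟨p, q⟩)
      · by_cases h : α r₀ = 0
        · simp only [hY, haN, if_pos h]
          exact sum_single_smul r₀ a'
        · simp [hY, haN, h]
      · by_cases h : 0 < α p ∧ α q < 0
        · simp only [hY, haN, if_pos h]
          exact hsum2 _ _ _ _ _ _ a'
        · simp [hY, haN, h]
    have hYα : ∀ t, (∑ r, Y t r * α r) = 0 := by
      rintro (r₀ | ⟨p, q⟩)
      · by_cases h : α r₀ = 0
        · simp only [hY, if_pos h]
          have := sum_single_smul (M := ℝ) r₀ α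
          simp only [smul_eq_mul] at this
          rw [this, h]
        · simp [hY, h]
      · by_cases h : 0 < α p ∧ α q < 0
        · simp only [hY, if_pos h]
          have := hsum2 (-α q) (α p) p q (inferInstance : AddCommMonoid ℝ) inferInstance α
          simp only [smul_eq_mul] at this
          rw [this]; ring
        · simp [hY, h]
    have hYb : ∀ t, (∑ r, Y t r * b r) = bN t := by
      rintro (r₀ | ⟨p, q⟩)
      · by_cases h : α r₀ = 0
        · simp only [hY, hbN, if_pos h]
          have := sum_single_smul (M := ℝ) r₀ b
          simpa [smul_eq_mul] using this
        · simp [hY, hbN, h]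
      · by_cases h : 0 < α p ∧ α q < 0
        · simp only [hY, hbN, if_pos h]
          have := hsum2 (-α q) (α p) p q (inferInstance : AddCommMonoid ℝ) inferInstance b
          simpa [smul_eq_mul] using this
        · simp [hY, hbN, h]
    have hyp' : ∀ y' : ι ⊕ ι × ι → ℝ, (∀ t, 0 ≤ y' t) → (∑ t, y' t • aN t) = 0 →
        0 ≤ ∑ t, y' t * bN t := by
      intro y' hy' hsum
      set y : ι → ℝ := fun r => ∑ t, y' t * Y t r with hy
      have hy0 : ∀ r, 0 ≤ y r :=
        fun r => Finset.sum_nonneg fun t _ => mul_nonneg (hy' t) (hY0 t r)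
      have swap : ∀ g : ι → ℝ, (∑ r, y r * g r) = ∑ t, y' t * (∑ r, Y t r * g r) := by
        intro g
        simp only [hy, Finset.sum_mul]
        rw [Finset.sum_comm]
        exact Finset.sum_congr rfl fun t _ => by
          rw [Finset.mul_sum]
          exact Finset.sum_congr rfl fun r _ => by ring
      have key : (∑ r, y r • a r) = 0 := by
        funext i
        have happ : (∑ r, y r • a r) i = ∑ r, y r * a r i := by
          rw [Finset.sum_apply]
          exact Finset.sum_congr rfl fun r _ => rfl
        rw [happ]
        induction i using Fin.lastCases with
        | last =>
          rw [swap (fun r => a r (Fin.last n))]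
          have : ∀ t, (∑ r, Y t r * a r (Fin.last n)) = 0 := fun t => hYα t
          simp [this]
        | cast i' =>
          rw [swap (fun r => a r i'.castSucc)]
          have h1 : ∀ t, (∑ r, Y t r * a r i'.castSucc) = aN t i' := by
            intro t
            have := congrFun (hYa' t) i'
            rw [Finset.sum_apply] at this
            simpa [ha', smul_eq_mul] using this
          have h2 : (∑ t, y' t * aN t i') = 0 := by
            have := congrFun hsum i'
            rw [Finset.sum_apply] at this
            simpa [smul_eq_mul] using this
          simp only [h1]
          exact h2
      have hfin := hyp y hy0 key
      rw [swap b] at hfin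
      simpa only [hYb] using hfin
    obtain ⟨x', hx'⟩ := IH (ι ⊕ ι × ι) aN bN hyp'
    set dotr : ι → ℝ := fun r => ∑ i, a' r i * x' i with hdotr
    have hzero : ∀ r, α r = 0 → dotr r ≤ b r := by
      intro r h
      have := hx' (Sum.inl r)
      simpa [haN, hbN, h, hdotr] using this
    have expand : ∀ (c₁ c₂ : ℝ) (v w : Fin n → ℝ),
        (∑ i, (c₁ • v + c₂ • w) i * x' i) = c₁ * (∑ i, v i * x' i) + c₂ * (∑ i, w i * x' i) := by
      intro c₁ c₂ v w
      rw [Finset.mul_sum, Finset.mul_sum, ← Finset.sum_add_distrib]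
      exact Finset.sum_congr rfl fun i _ => by
        simp only [Pi.add_apply, Pi.smul_apply, smul_eq_mul]; ring
    have hpair : ∀ p q : ι, 0 < α p → α q < 0 →
        (-α q) * dotr p + (α p) * dotr q ≤ (-α q) * b p + α p * b q := by
      intro p q hp hq
      have := hx' (Sum.inr (p, q))
      rw [haN, hbN] at this
      simp only [if_pos (⟨hp, hq⟩ : 0 < α p ∧ α q < 0)] at this
      rwa [expand] at this
    set V : ι → ℝ := fun r => (b r - dotr r) / α r with hV
    have hVpair : ∀ p q : ι, 0 < α p → α q < 0 → V q ≤ V p := by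
      intro p q hp hq
      have hq' : (0:ℝ) < -α q := by linarith
      have hrw : V q = (dotr q - b q) / (-α q) := by
        rw [hV]
        rw [show dotr q - b q = -(b q - dotr q) by ring, neg_div_neg_eq]
      rw [hrw, hV, div_le_div_iff₀ hq' hp]
      nlinarith [hpair p q hp hq]
    set Pos : Finset ι := Finset.univ.filter (fun r => 0 < α r) with hPos
    set Neg : Finset ι := Finset.univ.filter (fun r => α r < 0) with hNeg
    set ξ : ℝ := if hP : Pos.Nonempty then Pos.inf' hP V
      else if hN : Neg.Nonempty then Neg.sup' hN V else 0 with hξ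
    have hup : ∀ r ∈ Pos, ξ ≤ V r := by
      intro r hr
      have hP : Pos.Nonempty := ⟨r, hr⟩
      rw [hξ, dif_pos hP]
      exact Finset.inf'_le V hr
    have hlow : ∀ r ∈ Neg, V r ≤ ξ := by
      intro r hr
      by_cases hP : Pos.Nonempty
      · rw [hξ, dif_pos hP]
        apply Finset.le_inf'
        intro p hp
        exact hVpair p r (by simpa [hPos] using hp) (by simpa [hNeg] using hr)
      · rw [hξ, dif_neg hP, dif_pos ⟨r, hr⟩]
        exact Finset.le_sup' V hr
    refine ⟨Fin.snoc x' ξ, fun r => ?_⟩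
    have hsum : (∑ i, a r i * (Fin.snoc x' ξ : Fin (n+1) → ℝ) i) = dotr r + α r * ξ := by
      rw [Fin.sum_univ_castSucc]
      simp only [Fin.snoc_castSucc, Fin.snoc_last, hdotr, ha', hα]
    rw [hsum]
    rcases lt_trichotomy (α r) 0 with hneg | hz | hpos
    · have hrN : r ∈ Neg := by simp [hNeg, hneg]
      have h1 : V r ≤ ξ := hlow r hrN
      have h2 : α r * ξ ≤ α r * V r := mul_le_mul_of_nonpos_left h1 (le_of_lt hneg)
      have h3 : α r * V r = b r - dotr r := by
        rw [hV, mul_div_cancel₀ _ (ne_of_lt hneg)]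
      linarith
    · rw [hz]; simpa using hzero r hz
    · have hrP : r ∈ Pos := by simp [hPos, hpos]
      have h1 : ξ ≤ V r := hup r hrP
      have h2 : α r * ξ ≤ α r * V r := mul_le_mul_of_nonneg_left h1 (le_of_lt hpos)
      have h3 : α r * V r = b r - dotr r := by
        rw [hV, mul_div_cancel₀ _ (ne_of_gt hpos)]
      linarith

/-- Farkas' lemma, certificate form. -/
theorem farkas_cert {n : ℕ} {ι : Type} [Fintype ι] (A : ι → (Fin n → ℝ) →ₗ[ℝ] ℝ) (b : ι → ℝ)
    (hinf : ¬ ∃ x : Fin n → ℝ, ∀ r, A r x ≤ b r) :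
    ∃ y : ι → ℝ, (∀ r, 0 ≤ y r) ∧ (∀ x, (∑ r, y r * A r x) = 0) ∧ (∑ r, y r * b r) < 0 := by
  classical
  set a : ι → Fin n → ℝ := fun r i => A r (Pi.single i 1) with ha
  have hAa : ∀ r x, A r x = ∑ i, a r i * x i := by
    intro r x
    rw [LinearMap.pi_apply_eq_sum_univ (A r) x]
    refine Finset.sum_congr rfl fun i _ => ?_
    have hone : a r i = A r (fun j => if i = j then 1 else 0) := by
      simp only [ha]
      congr 1
      funext j
      simp [Pi.single_apply, eq_comm]
    rw [hone, smul_eq_mul, mul_comm]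
  by_contra hnc
  apply hinf
  have hyp : ∀ y : ι → ℝ, (∀ r, 0 ≤ y r) → (∑ r, y r • a r) = 0 → 0 ≤ ∑ r, y r * b r := by
    intro y hy0 hsum
    by_contra hlt
    apply hnc
    refine ⟨y, hy0, ?_, by linarith⟩
    intro x
    have : (∑ r, y r * A r x) = ∑ i, (∑ r, y r * a r i) * x i := by
      calc (∑ r, y r * A r x) = ∑ r, ∑ i, y r * (a r i * x i) := by
            simp only [hAa, Finset.mul_sum]
        _ = ∑ i, ∑ r, y r * (a r i * x i) := Finset.sum_comm
        _ = ∑ i, (∑ r, y r * a r i) * x i := by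
            refine Finset.sum_congr rfl fun i _ => ?_
            rw [Finset.sum_mul]
            exact Finset.sum_congr rfl fun r _ => by ring
    rw [this]
    have hz : ∀ i, (∑ r, y r * a r i) = 0 := by
      intro i
      have := congrFun hsum i
      rw [Finset.sum_apply] at this
      simpa [smul_eq_mul] using this
    simp [hz]
  obtain ⟨x, hx⟩ := fm_core_s11 n ι a b hyp
  exact ⟨x, fun r => by rw [hAa]; exact hx r⟩


section Helpers

private lemma ereal_coe_sum {ι : Type*} (s : Finset ι) (f : ι → ℝ) :
    ((∑ j ∈ s, f j : ℝ) : EReal) = ∑ j ∈ s, ((f j : ℝ) : EReal) := by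
  classical
  induction s using Finset.induction with
  | empty => simp
  | @insert a s' hj ih =>
      rw [Finset.sum_insert hj, Finset.sum_insert hj, EReal.coe_add, ih]

private lemma ereal_sum_eq_bot {ι : Type*} (s : Finset ι) (f : ι → EReal) (j₀ : ι)
    (hj₀ : j₀ ∈ s) (hbot : f j₀ = ⊥) : (∑ j ∈ s, f j) = ⊥ := by
  classical
  rw [← Finset.add_sum_erase s f hj₀, hbot]
  exact EReal.bot_add _

end Helpers

section Trop

variable {n m : ℕ} {σ₀ : Set (Fin n → ℝ)} {u : Fin m → (Fin n → ℝ) →ₗ[ℝ] ℝ}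

private lemma mem_dual_of_row (hσ : σ₀ = ⋂ i, {v : Fin n → ℝ | u i v ≤ 0}) (j : Fin m) :
    u j ∈ dualCone σ₀ := by
  intro v hv
  rw [hσ] at hv
  exact (Set.mem_iInter.1 hv) j

/-- every element of the dual cone is a nonnegative combination of the defining rows -/
private lemma dual_decomp (hσ : σ₀ = ⋂ i, {v : Fin n → ℝ | u i v ≤ 0})
    (w : (Fin n → ℝ) →ₗ[ℝ] ℝ) (hw : w ∈ dualCone σ₀) :
    ∃ a : Fin m → ℝ, (∀ j, 0 ≤ a j) ∧ ∀ x, w x = ∑ j, a j * u j x := by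
  classical
  set A : Option (Fin m) → (Fin n → ℝ) →ₗ[ℝ] ℝ := fun t => t.elim (-w) u with hA
  set b : Option (Fin m) → ℝ := fun t => t.elim (-1) (fun _ => 0) with hb
  have hinf : ¬ ∃ x : Fin n → ℝ, ∀ r, A r x ≤ b r := by
    rintro ⟨x, hx⟩
    have hxσ : x ∈ σ₀ := by
      rw [hσ]
      exact Set.mem_iInter.2 fun j => hx (some j)
    have h1 : -w x ≤ -1 := hx none
    have h2 : w x ≤ 0 := hw x hxσ
    linarith
  obtain ⟨y, hy0, hyA, hyb⟩ := farkas_cert A b hinf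
  have hybe : (∑ r, y r * b r) = -(y none) := by
    rw [Fintype.sum_option]
    simp [hb]
  have hc : 0 < y none := by
    rw [hybe] at hyb; linarith
  refine ⟨fun j => y (some j) / y none, fun j => div_nonneg (hy0 _) hc.le, fun x => ?_⟩
  have hAx := hyA x
  rw [Fintype.sum_option] at hAx
  simp only [hA, hb, Option.elim, LinearMap.neg_apply] at hAx
  have : y none * w x = ∑ j, y (some j) * u j x := by linarith [hAx]
  have hne : y none ≠ 0 := ne_of_gt hc
  have hwx : w x = (∑ j, y (some j) * u j x) / y none := by
    rw [eq_div_iff hne, mul_comm]; exact this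
  rw [hwx, Finset.sum_div]
  exact Finset.sum_congr rfl fun j _ => by ring


/-- Extract approximating points from closure membership. -/
private lemma approx (uD : Fin m → ↥(dualCone σ₀)) (Q : Set (Fin n → ℝ))
    (h : ↥(dualCone σ₀) → EReal) (hcl : h ∈ closure (iotaTrop σ₀ '' Q))
    (htop : ∀ j, h (uD j) ≠ ⊤) (δ : ℝ) (hδ : 0 < δ) (K : ℝ) :
    ∃ v ∈ Q, (∀ j, h (uD j) ≠ ⊥ → |(uD j : (Fin n → ℝ) →ₗ[ℝ] ℝ) v - (h (uD j)).toReal| < δ)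
      ∧ (∀ j, h (uD j) = ⊥ → ((uD j : (Fin n → ℝ) →ₗ[ℝ] ℝ) v) < K) := by
  classical
  set O : Fin m → Set EReal := fun j =>
    if h (uD j) = ⊥ then Iio ((K : ℝ) : EReal)
    else Ioo (((h (uD j)).toReal - δ : ℝ) : EReal) (((h (uD j)).toReal + δ : ℝ) : EReal) with hO
  set U : Set (↥(dualCone σ₀) → EReal) := ⋂ j : Fin m, (fun g => g (uD j)) ⁻¹' O j with hU
  have hUopen : IsOpen U := by
    apply isOpen_iInter_of_finite
    intro j
    apply IsOpen.preimage (continuous_apply (uD j))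
    by_cases hb : h (uD j) = ⊥
    · simp only [hO, if_pos hb]; exact isOpen_Iio
    · simp only [hO, if_neg hb]; exact isOpen_Ioo
  have hhU : h ∈ U := by
    rw [hU]
    refine Set.mem_iInter.2 fun j => ?_
    simp only [Set.mem_preimage, hO]
    by_cases hb : h (uD j) = ⊥
    · rw [if_pos hb, hb]; exact EReal.bot_lt_coe K
    · rw [if_neg hb]
      obtain ⟨r, hr⟩ : ∃ r : ℝ, h (uD j) = (r : ℝ) :=
        ⟨(h (uD j)).toReal, (EReal.coe_toReal (htop j) hb).symm⟩
      rw [hr, EReal.toReal_coe, Set.mem_Ioo]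
      exact ⟨EReal.coe_lt_coe_iff.2 (by linarith), EReal.coe_lt_coe_iff.2 (by linarith)⟩
  obtain ⟨g, hgU, x, hxQ, hgx⟩ := _root_.mem_closure_iff.1 hcl U hUopen hhU
  refine ⟨x, hxQ, ?_, ?_⟩
  · intro j hb
    have := Set.mem_iInter.1 hgU j
    rw [← hgx] at this
    simp only [Set.mem_preimage, hO, if_neg hb] at this
    have h1 : iotaTrop σ₀ x (uD j) = (((uD j : (Fin n → ℝ) →ₗ[ℝ] ℝ) x : ℝ) : EReal) := rfl
    rw [h1] at this
    obtain ⟨hlo, hhi⟩ := this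
    rw [EReal.coe_lt_coe_iff] at hlo hhi
    rw [abs_lt]
    constructor <;> linarith
  · intro j hb
    have := Set.mem_iInter.1 hgU j
    rw [← hgx] at this
    simp only [Set.mem_preimage, hO, if_pos hb] at this
    have h1 : iotaTrop σ₀ x (uD j) = (((uD j : (Fin n → ℝ) →ₗ[ℝ] ℝ) x : ℝ) : EReal) := rfl
    rw [h1] at this
    exact EReal.coe_lt_coe_iff.1 this

/-- value of `h` on a nonnegative combination of the rows. -/
private lemma h_combo (hσ : σ₀ = ⋂ i, {v : Fin n → ℝ | u i v ≤ 0})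
    (uD : Fin m → ↥(dualCone σ₀)) (huD : ∀ j, (uD j : (Fin n → ℝ) →ₗ[ℝ] ℝ) = u j)
    (h : ↥(dualCone σ₀) → EReal) (hN : h ∈ NRext σ₀)
    (a : Fin m → ℝ) (ha : ∀ j, 0 ≤ a j) (w : ↥(dualCone σ₀))
    (hw : ∀ x, (w : (Fin n → ℝ) →ₗ[ℝ] ℝ) x = ∑ j, a j * u j x) :
    h w = ∑ j, (a j : EReal) * h (uD j) := by
  classical
  obtain ⟨hTop, hZero, hAdd, hHom⟩ := hN
  -- sub-sums are in the dual cone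
  have hmem : ∀ s : Finset (Fin m), (∑ j ∈ s, a j • u j) ∈ dualCone σ₀ := by
    intro s v hv
    rw [hσ] at hv
    have := Set.mem_iInter.1 hv
    simp only [LinearMap.coe_sum, Finset.sum_apply, LinearMap.smul_apply, smul_eq_mul]
    exact Finset.sum_nonpos fun j _ => mul_nonpos_of_nonneg_of_nonpos (ha j) (this j)
  have key : ∀ s : Finset (Fin m), ∀ w' : ↥(dualCone σ₀),
      (∀ x, (w' : (Fin n → ℝ) →ₗ[ℝ] ℝ) x = ∑ j ∈ s, a j * u j x) →
      h w' = ∑ j ∈ s, (a j : EReal) * h (uD j) := by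
    intro s
    induction s using Finset.induction with
    | empty =>
      intro w' hw'
      rw [Finset.sum_empty]
      apply hZero
      apply LinearMap.ext
      intro x
      rw [hw' x, Finset.sum_empty]
      rfl
    | @insert j₀ s' hj₀ ih =>
      intro w' hw'
      set w1 : ↥(dualCone σ₀) := ⟨a j₀ • u j₀, by
        have := hmem {j₀}
        simpa using this⟩ with hw1
      set w2 : ↥(dualCone σ₀) := ⟨∑ j ∈ s', a j • u j, hmem s'⟩ with hw2
      have hsplit : (w' : (Fin n → ℝ) →ₗ[ℝ] ℝ) =
          (w1 : (Fin n → ℝ) →ₗ[ℝ] ℝ) + (w2 : (Fin n → ℝ) →ₗ[ℝ] ℝ) := by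
        apply LinearMap.ext
        intro x
        rw [hw' x, Finset.sum_insert hj₀]
        simp only [hw1, hw2, LinearMap.add_apply, LinearMap.smul_apply, smul_eq_mul,
          LinearMap.coe_sum, Finset.sum_apply]
      rw [hAdd w1 w2 w' hsplit, Finset.sum_insert hj₀]
      have h2 : h w2 = ∑ j ∈ s', (a j : EReal) * h (uD j) := by
        apply ih
        intro x
        simp only [hw2, LinearMap.coe_sum, Finset.sum_apply, LinearMap.smul_apply, smul_eq_mul]
      rw [h2]
      congr 1
      -- h w1 = a j₀ * h (uD j₀)
      rcases eq_or_lt_of_le (ha j₀) with hz | hpos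
      · have hcoe : (w1 : (Fin n → ℝ) →ₗ[ℝ] ℝ) = 0 := by
          rw [hw1]
          simp [← hz]
        rw [hZero w1 hcoe, ← hz]
        simp
      · exact hHom (a j₀) hpos (uD j₀) w1 (by rw [hw1, huD j₀])
  exact key Finset.univ w hw

private lemma h_combo_fin (hσ : σ₀ = ⋂ i, {v : Fin n → ℝ | u i v ≤ 0})
    (uD : Fin m → ↥(dualCone σ₀)) (huD : ∀ j, (uD j : (Fin n → ℝ) →ₗ[ℝ] ℝ) = u j)
    (h : ↥(dualCone σ₀) → EReal) (hN : h ∈ NRext σ₀)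
    (a : Fin m → ℝ) (ha : ∀ j, 0 ≤ a j) (w : ↥(dualCone σ₀))
    (hw : ∀ x, (w : (Fin n → ℝ) →ₗ[ℝ] ℝ) x = ∑ j, a j * u j x)
    (hfin : ∀ j, h (uD j) = ⊥ → a j = 0) :
    h w = ((∑ j, a j * (h (uD j)).toReal : ℝ) : EReal) := by
  rw [h_combo hσ uD huD h hN a ha w hw, ereal_coe_sum]
  refine Finset.sum_congr rfl fun j _ => ?_
  by_cases hb : h (uD j) = ⊥
  · rw [hb, hfin j hb]
    simp
  · rw [EReal.coe_mul]
    congr 1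
    exact (EReal.coe_toReal (hN.1 (uD j)) hb).symm

private lemma h_combo_bot (hσ : σ₀ = ⋂ i, {v : Fin n → ℝ | u i v ≤ 0})
    (uD : Fin m → ↥(dualCone σ₀)) (huD : ∀ j, (uD j : (Fin n → ℝ) →ₗ[ℝ] ℝ) = u j)
    (h : ↥(dualCone σ₀) → EReal) (hN : h ∈ NRext σ₀)
    (a : Fin m → ℝ) (ha : ∀ j, 0 ≤ a j) (w : ↥(dualCone σ₀))
    (hw : ∀ x, (w : (Fin n → ℝ) →ₗ[ℝ] ℝ) x = ∑ j, a j * u j x)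
    (j₀ : Fin m) (hb : h (uD j₀) = ⊥) (hpos : 0 < a j₀) :
    h w = ⊥ := by
  rw [h_combo hσ uD huD h hN a ha w hw]
  apply ereal_sum_eq_bot _ _ j₀ (Finset.mem_univ j₀)
  rw [hb]
  exact EReal.coe_mul_bot_of_pos hpos

private lemma mem_relint (B : Fin m → Prop) (τ : Set (Fin n → ℝ))
    (hτ : τ = {x | (∀ j, u j x ≤ 0) ∧ ∀ j, ¬ B j → u j x = 0})
    (w : Fin n → ℝ) (hw0 : ∀ j, ¬ B j → u j w = 0) (hwneg : ∀ j, B j → u j w < 0) :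
    w ∈ intrinsicInterior ℝ τ := by
  classical
  have wτ : w ∈ τ := by
    rw [hτ]
    refine ⟨fun j => ?_, hw0⟩
    by_cases hb : B j
    · exact (hwneg j hb).le
    · exact (hw0 j hb).le
  set V : Set (Fin n → ℝ) := ⋂ j : Fin m, (if B j then {x | u j x < 0} else Set.univ) with hV
  have hVopen : IsOpen V := by
    apply isOpen_iInter_of_finite
    intro j
    by_cases hb : B j
    · simp only [if_pos hb]
      exact IsOpen.preimage (u j).continuous_of_finiteDimensional isOpen_Iio
    · simp only [if_neg hb]; exact isOpen_univ
  have hwV : w ∈ V := Set.mem_iInter.2 fun j => by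
    by_cases hb : B j
    · simp only [if_pos hb]; exact hwneg j hb
    · simp only [if_neg hb]; trivial
  have hker : ∀ j, ¬ B j → ∀ x ∈ affineSpan ℝ τ, u j x = 0 := by
    intro j hb x hx
    have hle : affineSpan ℝ τ ≤ (LinearMap.ker (u j)).toAffineSubspace := by
      rw [affineSpan_le]
      intro y hy
      rw [hτ] at hy
      show y ∈ LinearMap.ker (u j)
      exact LinearMap.mem_ker.2 (hy.2 j hb)
    exact LinearMap.mem_ker.1 (Submodule.mem_toAffineSubspace.1 (hle hx))
  rw [mem_intrinsicInterior]
  refine ⟨⟨w, subset_affineSpan ℝ τ wτ⟩, ?_, rfl⟩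
  have hsub : ((↑) ⁻¹' V : Set (affineSpan ℝ τ)) ⊆ ((↑) ⁻¹' τ) := by
    rintro ⟨x, hx⟩ hxV
    simp only [Set.mem_preimage] at hxV ⊢
    rw [hτ]
    have hx0 : ∀ j, ¬ B j → u j x = 0 := fun j hb => hker j hb x hx
    refine ⟨fun j => ?_, hx0⟩
    by_cases hb : B j
    · have := Set.mem_iInter.1 hxV j
      simp only [if_pos hb] at this
      exact le_of_lt this
    · exact (hx0 j hb).le
  exact interior_maximal hsub (hVopen.preimage continuous_subtype_val) hwV

/-- Existence of a recession direction witness for `Q`. -/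
private lemma exists_wQ (hσ : σ₀ = ⋂ i, {v : Fin n → ℝ | u i v ≤ 0})
    (uD : Fin m → ↥(dualCone σ₀)) (huD : ∀ j, (uD j : (Fin n → ℝ) →ₗ[ℝ] ℝ) = u j)
    (h : ↥(dualCone σ₀) → EReal) (htop : ∀ j, h (uD j) ≠ ⊤)
    {mq : ℕ} (q : Fin mq → (Fin n → ℝ) →ₗ[ℝ] ℝ) (c : Fin mq → ℝ)
    (Q : Set (Fin n → ℝ)) (hQ : Q = ⋂ b, {v : Fin n → ℝ | q b v ≤ c b})
    (hcl : h ∈ closure (iotaTrop σ₀ '' Q)) :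
    ∃ w : Fin n → ℝ, (∀ j, u j w ≤ 0) ∧ (∀ j, h (uD j) ≠ ⊥ → u j w = 0) ∧
      (∀ j, h (uD j) = ⊥ → u j w ≤ -1) ∧ (∀ b, q b w ≤ 0) := by
  classical
  have exists_wi : ∀ i : Fin m, h (uD i) = ⊥ → ∃ wi : Fin n → ℝ,
      (∀ j, u j wi ≤ 0) ∧ (∀ j, h (uD j) ≠ ⊥ → u j wi = 0) ∧ u i wi ≤ -1 ∧
      (∀ b, q b wi ≤ 0) := by
    intro i hiB
    set A : Option ((Fin m ⊕ Fin m) ⊕ Fin mq) → (Fin n → ℝ) →ₗ[ℝ] ℝ := fun t =>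
      t.elim (u i) (fun t' => t'.elim
        (fun t'' => t''.elim u (fun j => if h (uD j) = ⊥ then 0 else -u j)) q) with hA
    set bb : Option ((Fin m ⊕ Fin m) ⊕ Fin mq) → ℝ := fun t => t.elim (-1) (fun _ => 0) with hbb
    by_cases hfeas : ∃ x : Fin n → ℝ, ∀ r, A r x ≤ bb r
    · obtain ⟨x, hx⟩ := hfeas
      refine ⟨x, fun j => hx (some (Sum.inl (Sum.inl j))), fun j hb => ?_,
        hx none, fun b => hx (some (Sum.inr b))⟩
      have h1 : u j x ≤ 0 := hx (some (Sum.inl (Sum.inl j)))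
      have h2 := hx (some (Sum.inl (Sum.inr j)))
      simp only [hA, hbb, Option.elim, Sum.elim_inl, Sum.elim_inr, if_neg hb,
        LinearMap.neg_apply] at h2
      linarith
    · exfalso
      obtain ⟨y, hy0, hyA, hyb⟩ := farkas_cert A bb hfeas
      have hybe : (∑ r, y r * bb r) = -(y none) := by
        rw [Fintype.sum_option]
        simp [hbb]
      have hc : 0 < y none := by rw [hybe] at hyb; linarith
      -- the constant
      set C : ℝ := (∑ j, y (some (Sum.inl (Sum.inl j))) *
            (if h (uD j) = ⊥ then 0 else ((h (uD j)).toReal + 1)))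
          + (∑ j, y (some (Sum.inl (Sum.inr j))) *
            (if h (uD j) = ⊥ then 0 else (1 - (h (uD j)).toReal)))
          + (∑ b, y (some (Sum.inr b)) * c b) with hC
      have hineq : ∀ k : ℕ, (0:ℝ) ≤ C - y none * k := by
        intro k
        obtain ⟨v, hvQ, hvfin, hvbot⟩ := approx uD Q h hcl htop 1 one_pos (-(k:ℝ))
        simp only [huD] at hvfin hvbot
        have h0 := hyA v
        rw [Fintype.sum_option, Fintype.sum_sum_type, Fintype.sum_sum_type] at h0
        have hS1 : (∑ j, y (some (Sum.inl (Sum.inl j))) * A (some (Sum.inl (Sum.inl j))) v)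
            ≤ ∑ j, y (some (Sum.inl (Sum.inl j))) *
              (if h (uD j) = ⊥ then 0 else ((h (uD j)).toReal + 1)) := by
          apply Finset.sum_le_sum
          intro j _
          apply mul_le_mul_of_nonneg_left _ (hy0 _)
          simp only [hA, Option.elim, Sum.elim_inl]
          by_cases hb : h (uD j) = ⊥
          · rw [if_pos hb]
            have := hvbot j hb
            have hk : (0:ℝ) ≤ (k:ℝ) := Nat.cast_nonneg k
            linarith
          · rw [if_neg hb]
            have := abs_lt.1 (hvfin j hb)
            linarith [this.2]
        have hS2 : (∑ j, y (some (Sum.inl (Sum.inr j))) * A (some (Sum.inl (Sum.inr j))) v)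
            ≤ ∑ j, y (some (Sum.inl (Sum.inr j))) *
              (if h (uD j) = ⊥ then 0 else (1 - (h (uD j)).toReal)) := by
          apply Finset.sum_le_sum
          intro j _
          apply mul_le_mul_of_nonneg_left _ (hy0 _)
          simp only [hA, Option.elim, Sum.elim_inl, Sum.elim_inr]
          by_cases hb : h (uD j) = ⊥
          · simp [if_pos hb]
          · simp only [if_neg hb, LinearMap.neg_apply]
            have := abs_lt.1 (hvfin j hb)
            linarith [this.1]
        have hS3 : (∑ b, y (some (Sum.inr b)) * A (some (Sum.inr b)) v)
            ≤ ∑ b, y (some (Sum.inr b)) * c b := by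
          apply Finset.sum_le_sum
          intro b _
          apply mul_le_mul_of_nonneg_left _ (hy0 _)
          simp only [hA, Option.elim, Sum.elim_inr]
          rw [hQ] at hvQ
          exact Set.mem_iInter.1 hvQ b
        have hN0 : y none * A none v ≤ y none * (-(k:ℝ)) := by
          apply mul_le_mul_of_nonneg_left _ (hy0 _)
          simp only [hA, Option.elim]
          exact (hvbot i hiB).le
        rw [hC]
        simp only [hA, hbb] at h0
        simp only [hA] at hS1 hS2 hS3 hN0
        linarith
      obtain ⟨k, hk⟩ := exists_nat_gt (C / y none)
      have : C < y none * k := by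
        rw [div_lt_iff₀ hc] at hk
        linarith
      linarith [hineq k]
  choose! wi hw1 hw2 hw3 hw4 using exists_wi
  set IInf : Finset (Fin m) := Finset.univ.filter (fun i => h (uD i) = ⊥) with hIInf
  have hmemI : ∀ i ∈ IInf, h (uD i) = ⊥ := fun i hi => (Finset.mem_filter.1 hi).2
  refine ⟨∑ i ∈ IInf, wi i, ?_, ?_, ?_, ?_⟩
  · intro j
    rw [map_sum]
    exact Finset.sum_nonpos fun i hi => hw1 i (hmemI i hi) j
  · intro j hb
    rw [map_sum]
    exact Finset.sum_eq_zero fun i hi => hw2 i (hmemI i hi) j hb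
  · intro j hb
    rw [map_sum]
    have hjI : j ∈ IInf := Finset.mem_filter.2 ⟨Finset.mem_univ j, hb⟩
    calc (∑ i ∈ IInf, u j (wi i)) ≤ ∑ i ∈ IInf, (if i = j then (-1:ℝ) else 0) := by
          apply Finset.sum_le_sum
          intro i hi
          by_cases hij : i = j
          · subst hij; rw [if_pos rfl]; exact hw3 i (hmemI i hi)
          · rw [if_neg hij]; exact hw1 i (hmemI i hi) j
      _ = -1 := by rw [Finset.sum_ite_eq' IInf j (fun _ => (-1:ℝ)), if_pos hjI]
  · intro b
    rw [map_sum]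
    exact Finset.sum_nonpos fun i hi => hw4 i (hmemI i hi) b

/-- Exact attainment of the finite values of `h` on `Q`. -/
private lemma attain (hσ : σ₀ = ⋂ i, {v : Fin n → ℝ | u i v ≤ 0})
    (uD : Fin m → ↥(dualCone σ₀)) (huD : ∀ j, (uD j : (Fin n → ℝ) →ₗ[ℝ] ℝ) = u j)
    (h : ↥(dualCone σ₀) → EReal) (htop : ∀ j, h (uD j) ≠ ⊤)
    {mq : ℕ} (q : Fin mq → (Fin n → ℝ) →ₗ[ℝ] ℝ) (c : Fin mq → ℝ)
    (Q : Set (Fin n → ℝ)) (hQ : Q = ⋂ b, {v : Fin n → ℝ | q b v ≤ c b})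
    (hcl : h ∈ closure (iotaTrop σ₀ '' Q)) :
    ∃ x ∈ Q, ∀ j, h (uD j) ≠ ⊥ → u j x = (h (uD j)).toReal := by
  classical
  set A : Fin mq ⊕ (Fin m ⊕ Fin m) → (Fin n → ℝ) →ₗ[ℝ] ℝ := fun t =>
    t.elim q (fun t' => t'.elim (fun j => if h (uD j) = ⊥ then 0 else u j)
      (fun j => if h (uD j) = ⊥ then 0 else -u j)) with hA
  set bb : Fin mq ⊕ (Fin m ⊕ Fin m) → ℝ := fun t =>
    t.elim c (fun t' => t'.elim (fun j => if h (uD j) = ⊥ then 0 else (h (uD j)).toReal)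
      (fun j => if h (uD j) = ⊥ then 0 else -(h (uD j)).toReal)) with hbb
  by_cases hfeas : ∃ x : Fin n → ℝ, ∀ r, A r x ≤ bb r
  · obtain ⟨x, hx⟩ := hfeas
    refine ⟨x, ?_, fun j hb => ?_⟩
    · rw [hQ]
      exact Set.mem_iInter.2 fun b => hx (Sum.inl b)
    · have h1 := hx (Sum.inr (Sum.inl j))
      have h2 := hx (Sum.inr (Sum.inr j))
      simp only [hA, hbb, Sum.elim_inl, Sum.elim_inr, if_neg hb, LinearMap.neg_apply] at h1 h2
      linarith
  · exfalso
    obtain ⟨y, hy0, hyA, hyb⟩ := farkas_cert A bb hfeas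
    set S : ℝ := (∑ j, y (Sum.inr (Sum.inl j))) + (∑ j, y (Sum.inr (Sum.inr j))) with hS
    have hS0 : 0 ≤ S := by
      rw [hS]
      have : (0:ℝ) ≤ ∑ j, y (Sum.inr (Sum.inl j)) :=
        Finset.sum_nonneg fun j _ => hy0 _
      have : (0:ℝ) ≤ ∑ j, y (Sum.inr (Sum.inr j)) :=
        Finset.sum_nonneg fun j _ => hy0 _
      positivity
    set ε : ℝ := -(∑ r, y r * bb r) with hε
    have hε0 : 0 < ε := by rw [hε]; linarith
    set δ : ℝ := ε / (S + 1) with hδdef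
    have hδ0 : 0 < δ := div_pos hε0 (by linarith)
    obtain ⟨v, hvQ, hvfin, hvbot⟩ := approx uD Q h hcl htop δ hδ0 0
    simp only [huD] at hvfin hvbot
    have h0 := hyA v
    rw [Fintype.sum_sum_type, Fintype.sum_sum_type] at h0
    have hS1 : (∑ b, y (Sum.inl b) * A (Sum.inl b) v) ≤ ∑ b, y (Sum.inl b) * bb (Sum.inl b) := by
      apply Finset.sum_le_sum
      intro b _
      apply mul_le_mul_of_nonneg_left _ (hy0 _)
      simp only [hA, hbb, Sum.elim_inl]
      rw [hQ] at hvQ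
      exact Set.mem_iInter.1 hvQ b
    have hS2 : (∑ j, y (Sum.inr (Sum.inl j)) * A (Sum.inr (Sum.inl j)) v)
        ≤ ∑ j, y (Sum.inr (Sum.inl j)) * (bb (Sum.inr (Sum.inl j)) + δ * 1) := by
      apply Finset.sum_le_sum
      intro j _
      apply mul_le_mul_of_nonneg_left _ (hy0 _)
      simp only [hA, hbb, Sum.elim_inl, Sum.elim_inr]
      by_cases hb : h (uD j) = ⊥
      · simp [if_pos hb]; linarith
      · rw [if_neg hb, if_neg hb]
        have := abs_lt.1 (hvfin j hb)
        linarith [this.2]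
    have hS3 : (∑ j, y (Sum.inr (Sum.inr j)) * A (Sum.inr (Sum.inr j)) v)
        ≤ ∑ j, y (Sum.inr (Sum.inr j)) * (bb (Sum.inr (Sum.inr j)) + δ * 1) := by
      apply Finset.sum_le_sum
      intro j _
      apply mul_le_mul_of_nonneg_left _ (hy0 _)
      simp only [hA, hbb, Sum.elim_inl, Sum.elim_inr]
      by_cases hb : h (uD j) = ⊥
      · simp [if_pos hb]; linarith
      · rw [if_neg hb, if_neg hb]
        simp only [LinearMap.neg_apply]
        have := abs_lt.1 (hvfin j hb)
        linarith [this.1]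
    -- combine
    have hsum2 : (∑ j, y (Sum.inr (Sum.inl j)) * (bb (Sum.inr (Sum.inl j)) + δ * 1))
        = (∑ j, y (Sum.inr (Sum.inl j)) * bb (Sum.inr (Sum.inl j)))
          + δ * (∑ j, y (Sum.inr (Sum.inl j))) := by
      rw [Finset.mul_sum, ← Finset.sum_add_distrib]
      exact Finset.sum_congr rfl fun j _ => by ring
    have hsum3 : (∑ j, y (Sum.inr (Sum.inr j)) * (bb (Sum.inr (Sum.inr j)) + δ * 1))
        = (∑ j, y (Sum.inr (Sum.inr j)) * bb (Sum.inr (Sum.inr j)))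
          + δ * (∑ j, y (Sum.inr (Sum.inr j))) := by
      rw [Finset.mul_sum, ← Finset.sum_add_distrib]
      exact Finset.sum_congr rfl fun j _ => by ring
    have hbbsum : (∑ r, y r * bb r) = (∑ b, y (Sum.inl b) * bb (Sum.inl b))
        + ((∑ j, y (Sum.inr (Sum.inl j)) * bb (Sum.inr (Sum.inl j)))
          + (∑ j, y (Sum.inr (Sum.inr j)) * bb (Sum.inr (Sum.inr j)))) := by
      rw [Fintype.sum_sum_type, Fintype.sum_sum_type]
    have hδS : δ * S < ε := by
      rw [hδdef]
      rw [div_mul_eq_mul_div, div_lt_iff₀ (by linarith : (0:ℝ) < S + 1)]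
      nlinarith
    rw [hS] at hδS
    rw [hε] at hδS
    linarith

set_option maxHeartbeats 2000000 in
/-- Core lemma: closure of the intersection of two compatible polyhedra. -/
private lemma core (hσ : σ₀ = ⋂ i, {v : Fin n → ℝ | u i v ≤ 0})
    (h : ↥(dualCone σ₀) → EReal) (hN : h ∈ NRext σ₀)
    (P P' : Set (Fin n → ℝ)) (hPpoly : IsPolyhedron P) (hP'poly : IsPolyhedron P')
    (hcompat : ∀ τ : Set (Fin n → ℝ), IsFaceOfCone σ₀ τ →
      τ ⊆ recCone P ∨ intrinsicInterior ℝ τ ∩ recCone P = ∅)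
    (hclP : h ∈ closure (iotaTrop σ₀ '' P)) (hclP' : h ∈ closure (iotaTrop σ₀ '' P')) :
    h ∈ closure (iotaTrop σ₀ '' (P ∩ P')) := by
  classical
  obtain ⟨mp, p, cp, hPdef⟩ := hPpoly
  obtain ⟨mp', p', cp', hP'def⟩ := hP'poly
  set uD : Fin m → ↥(dualCone σ₀) := fun j => ⟨u j, mem_dual_of_row hσ j⟩ with huDdef
  have huD : ∀ j, (uD j : (Fin n → ℝ) →ₗ[ℝ] ℝ) = u j := fun j => rfl
  have htop : ∀ j, h (uD j) ≠ ⊤ := fun j => hN.1 (uD j)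
  obtain ⟨wP, hwP1, hwP2, hwP3, hwP4⟩ := exists_wQ hσ uD huD h htop p cp P hPdef hclP
  obtain ⟨w', hw'1, hw'2, hw'3, hw'4⟩ := exists_wQ hσ uD huD h htop p' cp' P' hP'def hclP'
  obtain ⟨x₀, hx₀P, hx₀⟩ := attain hσ uD huD h htop p cp P hPdef hclP
  obtain ⟨x₀', hx₀'P, hx₀'⟩ := attain hσ uD huD h htop p' cp' P' hP'def hclP'
  set IFfin : Finset (Fin m) := Finset.univ.filter (fun j => ¬ (h (uD j) = ⊥)) with hIFfin
  set ustar : (Fin n → ℝ) →ₗ[ℝ] ℝ := ∑ j ∈ IFfin, u j with hustar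
  have hustar_ev : ∀ x, ustar x = ∑ j ∈ IFfin, u j x := by
    intro x
    rw [hustar]
    simp only [LinearMap.coe_sum, Finset.sum_apply]
  set τ : Set (Fin n → ℝ) := {x ∈ σ₀ | ustar x = 0} with hτdef
  have hτface : IsFaceOfCone σ₀ τ := by
    refine ⟨ustar, fun x hx => ?_, rfl⟩
    rw [hσ] at hx
    have hall := Set.mem_iInter.1 hx
    rw [hustar_ev]
    exact Finset.sum_nonpos fun j _ => hall j
  have hτchar : τ = {x | (∀ j, u j x ≤ 0) ∧ ∀ j, ¬ (h (uD j) = ⊥) → u j x = 0} := by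
    ext x
    rw [hτdef]
    simp only [Set.mem_setOf_eq, Set.mem_sep_iff]
    constructor
    · rintro ⟨hxσ, hx0⟩
      rw [hσ] at hxσ
      have hall := Set.mem_iInter.1 hxσ
      refine ⟨fun j => hall j, fun j hb => ?_⟩
      rw [hustar_ev] at hx0
      have := (Finset.sum_eq_zero_iff_of_nonpos (fun i _ => hall i)).1 hx0 j
        (Finset.mem_filter.2 ⟨Finset.mem_univ j, hb⟩)
      exact this
    · rintro ⟨hle, h0⟩
      refine ⟨by rw [hσ]; exact Set.mem_iInter.2 fun j => hle j, ?_⟩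
      rw [hustar_ev]
      exact Finset.sum_eq_zero fun j hj => h0 j (Finset.mem_filter.1 hj).2
  have hwPrelint : wP ∈ intrinsicInterior ℝ τ := by
    refine mem_relint (fun j => h (uD j) = ⊥) τ hτchar wP hwP2 (fun j hb => ?_)
    have := hwP3 j hb
    linarith
  have hwPrec : wP ∈ recCone P := by
    intro v hv
    rw [hPdef] at hv ⊢
    refine Set.mem_iInter.2 fun b => ?_
    have h1 := Set.mem_iInter.1 hv b
    simp only [Set.mem_setOf_eq, map_add] at h1 ⊢
    linarith [hwP4 b]
  have hτrec : τ ⊆ recCone P := by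
    rcases hcompat τ hτface with hL | hR
    · exact hL
    · exact absurd hR (Set.nonempty_iff_ne_empty.1 ⟨wP, hwPrelint, hwPrec⟩)
  set z : Fin n → ℝ := x₀' - x₀ with hz
  set T : ℝ := ∑ j ∈ Finset.univ.filter (fun j => h (uD j) = ⊥), |u j z| with hT
  have hT0 : 0 ≤ T := Finset.sum_nonneg fun j _ => abs_nonneg _
  have hTz : ∀ j, h (uD j) = ⊥ → u j z ≤ T := by
    intro j hb
    calc u j z ≤ |u j z| := le_abs_self _
      _ ≤ T := Finset.single_le_sum (f := fun i => |u i z|) (fun i _ => abs_nonneg _)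
          (Finset.mem_filter.2 ⟨Finset.mem_univ j, hb⟩)
  have hzfin : ∀ j, ¬ (h (uD j) = ⊥) → u j z = 0 := by
    intro j hb
    rw [hz, map_sub, hx₀' j hb, hx₀ j hb, sub_self]
  have hmemseq : ∀ s : ℝ, T ≤ s → x₀' + s • w' ∈ P ∩ P' := by
    intro s hs
    have hs0 : 0 ≤ s := le_trans hT0 hs
    constructor
    · have hzτ : z + s • w' ∈ τ := by
        rw [hτchar]
        have hev : ∀ j, u j (z + s • w') = u j z + s * u j w' := by
          intro j
          rw [map_add, map_smul, smul_eq_mul]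
        constructor
        · intro j
          rw [hev j]
          by_cases hb : h (uD j) = ⊥
          · have h1 := hTz j hb
            have h2 := hw'3 j hb
            nlinarith
          · rw [hzfin j hb, hw'2 j hb]
            simp
        · intro j hb
          rw [hev j, hzfin j hb, hw'2 j hb]
          simp
      have hmem := hτrec hzτ x₀ hx₀P
      have heq : x₀ + (z + s • w') = x₀' + s • w' := by
        rw [hz]
        abel
      rwa [heq] at hmem
    · rw [hP'def]
      refine Set.mem_iInter.2 fun b => ?_
      have h1 : p' b x₀' ≤ cp' b := by
        rw [hP'def] at hx₀'P
        exact Set.mem_iInter.1 hx₀'P b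
      have h2 : p' b w' ≤ 0 := hw'4 b
      simp only [Set.mem_setOf_eq, map_add, map_smul, smul_eq_mul]
      nlinarith
  set vseq : ℕ → Fin n → ℝ := fun t => x₀' + (T + (t:ℝ)) • w' with hvseq
  have hvmem : ∀ t : ℕ, vseq t ∈ P ∩ P' := by
    intro t
    apply hmemseq
    have : (0:ℝ) ≤ (t:ℝ) := Nat.cast_nonneg t
    linarith
  have htend : Filter.Tendsto (fun t : ℕ => iotaTrop σ₀ (vseq t)) Filter.atTop (nhds h) := by
    rw [tendsto_pi_nhds]
    intro ub
    obtain ⟨a, ha0, harep⟩ := dual_decomp hσ (ub : (Fin n → ℝ) →ₗ[ℝ] ℝ) ub.2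
    have hval : ∀ t : ℕ, (ub : (Fin n → ℝ) →ₗ[ℝ] ℝ) (vseq t)
        = (∑ j, a j * u j x₀') + (T + (t:ℝ)) * (∑ j, a j * u j w') := by
      intro t
      rw [harep, Finset.mul_sum, ← Finset.sum_add_distrib]
      refine Finset.sum_congr rfl fun j _ => ?_
      rw [hvseq]
      simp only [map_add, map_smul, smul_eq_mul]
      ring
    have hiota : ∀ t : ℕ, iotaTrop σ₀ (vseq t) ub
        = (((ub : (Fin n → ℝ) →ₗ[ℝ] ℝ) (vseq t) : ℝ) : EReal) := fun t => rfl
    by_cases hcase : ∀ j, h (uD j) = ⊥ → a j = 0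
    · have hhval : h ub = ((∑ j, a j * (h (uD j)).toReal : ℝ) : EReal) :=
        h_combo_fin hσ uD huD h hN a ha0 ub harep hcase
      have hconst : ∀ t : ℕ, iotaTrop σ₀ (vseq t) ub = h ub := by
        intro t
        rw [hiota t, hval t, hhval]
        have e1 : (∑ j, a j * u j w') = 0 := Finset.sum_eq_zero fun j _ => by
          by_cases hb : h (uD j) = ⊥
          · rw [hcase j hb, zero_mul]
          · rw [hw'2 j hb, mul_zero]
        have e2 : (∑ j, a j * u j x₀') = ∑ j, a j * (h (uD j)).toReal :=
          Finset.sum_congr rfl fun j _ => by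
            by_cases hb : h (uD j) = ⊥
            · rw [hcase j hb, zero_mul, zero_mul]
            · rw [hx₀' j hb]
        rw [e1, e2, mul_zero, add_zero]
      have : (fun t : ℕ => iotaTrop σ₀ (vseq t) ub) = fun _ => h ub := funext hconst
      rw [this]
      exact tendsto_const_nhds
    · push_neg at hcase
      obtain ⟨j₀, hbj₀, haj₀⟩ := hcase
      have haj₀' : 0 < a j₀ := lt_of_le_of_ne (ha0 j₀) (Ne.symm haj₀)
      have hhbot : h ub = ⊥ := h_combo_bot hσ uD huD h hN a ha0 ub harep j₀ hbj₀ haj₀'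
      rw [hhbot, EReal.tendsto_nhds_bot_iff_real]
      intro M
      have hDneg : (∑ j, a j * u j w') ≤ -(a j₀) := by
        calc (∑ j, a j * u j w') ≤ ∑ j, (if j = j₀ then -(a j₀) else 0) := by
              apply Finset.sum_le_sum
              intro j _
              by_cases hj : j = j₀
              · subst hj
                rw [if_pos rfl]
                have := hw'3 j hbj₀
                nlinarith [ha0 j]
              · rw [if_neg hj]
                by_cases hb : h (uD j) = ⊥
                · have := hw'3 j hb
                  nlinarith [ha0 j]
                · rw [hw'2 j hb, mul_zero]
          _ = -(a j₀) := by
              rw [Finset.sum_ite_eq' Finset.univ j₀ (fun _ => -(a j₀))]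
              rw [if_pos (Finset.mem_univ j₀)]
      have hD0 : (∑ j, a j * u j w') < 0 := lt_of_le_of_lt hDneg (by linarith)
      obtain ⟨N, hNgt⟩ := exists_nat_gt
        (((∑ j, a j * u j x₀') - M) / (-(∑ j, a j * u j w')) - T)
      refine Filter.eventually_atTop.2 ⟨N, fun t ht => ?_⟩
      rw [hiota t]
      show (((ub : (Fin n → ℝ) →ₗ[ℝ] ℝ) (vseq t) : ℝ) : EReal) < ((M:ℝ) : EReal)
      rw [EReal.coe_lt_coe_iff, hval t]
      have hNt : (N:ℝ) ≤ (t:ℝ) := Nat.cast_le.2 ht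
      have hTt : ((∑ j, a j * u j x₀') - M) / (-(∑ j, a j * u j w')) < T + (t:ℝ) := by
        linarith
      rw [div_lt_iff₀ (by linarith : (0:ℝ) < -(∑ j, a j * u j w'))] at hTt
      nlinarith
  exact mem_closure_of_tendsto htend
    (Filter.Eventually.of_forall fun t => ⟨vseq t, hvmem t, rfl⟩)
end Trop

/-- Let `σ₀ ⊆ ℝⁿ` be a pointed polyhedral cone and `𝒞, 𝒞'` finite collections of polyhedra
in `ℝⁿ`.  If for every `P ∈ 𝒞` and every face `τ` of `σ₀` either `τ ⊆ ρ(P)` or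
`relint(τ) ∩ ρ(P) = ∅`, then, taking closures in `N_ℝ(σ₀)` (i.e. intersecting ambient
pointwise-convergence closures with `N_ℝ(σ₀)`), one has
`closure(ι(|𝒞| ∩ |𝒞'|)) = closure(ι(|𝒞|)) ∩ closure(ι(|𝒞'|))`. -/
theorem closure_inter_supports {n : ℕ} (σ₀ : Set (Fin n → ℝ)) (hσ₀ : IsPolyCone σ₀)
    (hpt : IsPointedSet σ₀) (𝒞 𝒞' : Set (Set (Fin n → ℝ)))
    (h𝒞fin : 𝒞.Finite) (h𝒞'fin : 𝒞'.Finite)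
    (h𝒞 : ∀ P ∈ 𝒞, IsPolyhedron P) (h𝒞' : ∀ P ∈ 𝒞', IsPolyhedron P)
    (hcompat : ∀ P ∈ 𝒞, ∀ τ : Set (Fin n → ℝ), IsFaceOfCone σ₀ τ →
      τ ⊆ recCone P ∨ intrinsicInterior ℝ τ ∩ recCone P = ∅) :
    NRext σ₀ ∩ closure (iotaTrop σ₀ '' (⋃₀ 𝒞 ∩ ⋃₀ 𝒞')) =
      (NRext σ₀ ∩ closure (iotaTrop σ₀ '' ⋃₀ 𝒞)) ∩
        (NRext σ₀ ∩ closure (iotaTrop σ₀ '' ⋃₀ 𝒞')) := by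
  classical
  obtain ⟨m, u, hσ⟩ := hσ₀
  apply Set.Subset.antisymm
  · rintro h ⟨hN, hcl⟩
    exact ⟨⟨hN, closure_mono (Set.image_mono Set.inter_subset_left) hcl⟩,
      ⟨hN, closure_mono (Set.image_mono Set.inter_subset_right) hcl⟩⟩
  · rintro h ⟨⟨hN, hcl⟩, ⟨-, hcl'⟩⟩
    refine ⟨hN, ?_⟩
    have hdec : closure (iotaTrop σ₀ '' ⋃₀ 𝒞) = ⋃ P ∈ 𝒞, closure (iotaTrop σ₀ '' P) := by
      rw [Set.sUnion_eq_biUnion, Set.image_iUnion₂]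
      exact h𝒞fin.closure_biUnion _
    have hdec' : closure (iotaTrop σ₀ '' ⋃₀ 𝒞') = ⋃ P ∈ 𝒞', closure (iotaTrop σ₀ '' P) := by
      rw [Set.sUnion_eq_biUnion, Set.image_iUnion₂]
      exact h𝒞'fin.closure_biUnion _
    rw [hdec] at hcl
    rw [hdec'] at hcl'
    obtain ⟨P, hP, hclP⟩ := Set.mem_iUnion₂.1 hcl
    obtain ⟨P', hP', hclP'⟩ := Set.mem_iUnion₂.1 hcl'
    have hsub : P ∩ P' ⊆ ⋃₀ 𝒞 ∩ ⋃₀ 𝒞' :=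
      Set.inter_subset_inter (Set.subset_sUnion_of_mem hP) (Set.subset_sUnion_of_mem hP')
    exact closure_mono (Set.image_mono hsub)
      (core hσ h hN P P' (h𝒞 P hP) (h𝒞' P' hP') (fun τ hτ => hcompat P hP τ hτ) hclP hclP')
end

section
/- Let σ₀ ⊆ ℝ^n be a pointed polyhedral cone, and let 𝒫, 𝒫', 𝒬 be finite collections of polyhedra in ℝ^n. Suppose that for every Q ∈ 𝒬 and every face τ of σ₀, either τ ⊆ ρ(Q) or relint(τ) ∩ ρ(Q) = ∅, and that the same condition holds for every nonempty polyhedron of the form P ∩ Q with P ∈ 𝒫, Q ∈ 𝒬. Then, taking closures in N_ℝ(σ₀) and writing |𝒫| = ⋃_{P∈𝒫} P, one has closure(ι(|𝒫|)) ∩ closure(ι(|𝒫'|)) ∩ closure(ι(|𝒬|)) = closure(ι(|𝒫| ∩ |𝒫'| ∩ |𝒬|)). -/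
open Set Pointwise

open Filter
open Filter

namespace TropClosureAux

lemma apply_eq_sum {n : ℕ} (u : (Fin n → ℝ) →ₗ[ℝ] ℝ) (v : Fin n → ℝ) :
    u v = ∑ i, v i * u (Pi.single i 1) := by
  have hv : v = ∑ i, v i • (Pi.single i (1:ℝ) : Fin n → ℝ) := by
    funext j
    rw [Finset.sum_apply]
    simp [Pi.single_apply]
  conv_lhs => rw [hv]
  rw [map_sum]
  simp [mul_comm]

/-- cone generated by finitely many vectors -/
def coneOf {W : Type*} [AddCommGroup W] [Module ℝ W] {ι : Type*} [Fintype ι]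
    (x : ι → W) : Set W :=
  {b | ∃ lam : ι → ℝ, (∀ j, 0 ≤ lam j) ∧ b = ∑ j, lam j • x j}

lemma convex_coneOf {W : Type*} [AddCommGroup W] [Module ℝ W] {ι : Type*} [Fintype ι]
    (x : ι → W) : Convex ℝ (coneOf x) := by
  rintro a ⟨la, hla, rfl⟩ b ⟨lb, hlb, rfl⟩ s t hs ht _
  refine ⟨fun j => s * la j + t * lb j,
    fun j => add_nonneg (mul_nonneg hs (hla j)) (mul_nonneg ht (hlb j)), ?_⟩
  rw [Finset.smul_sum, Finset.smul_sum, ← Finset.sum_add_distrib]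
  refine Finset.sum_congr rfl fun j _ => ?_
  rw [add_smul, smul_smul, smul_smul]

lemma carath_aux {W : Type*} [AddCommGroup W] [Module ℝ W] {ι : Type*} [Fintype ι]
    [DecidableEq ι] (x : ι → W) (s : Finset ι) :
    ∀ (lam : ι → ℝ), (∀ j, 0 ≤ lam j) → (∀ j ∉ s, lam j = 0) →
    ∃ (t : Finset ι) (mu : ι → ℝ), LinearIndependent ℝ (fun j : t => x j) ∧
      (∀ j, 0 ≤ mu j) ∧ (∀ j ∉ t, mu j = 0) ∧ ∑ j, mu j • x j = ∑ j, lam j • x j := by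
  induction s using Finset.strongInductionOn with
  | _ s ih =>
    intro lam hlam hsupp
    by_cases hli : LinearIndependent ℝ (fun j : s => x j)
    · exact ⟨s, lam, hli, hlam, hsupp, rfl⟩
    · -- get a dependence supported on s, with a positive coefficient somewhere
      obtain ⟨d, hd0, i0, hi0⟩ := Fintype.not_linearIndependent_iff.1 hli
      -- extend to ι
      have key : ∃ e : ι → ℝ, (∑ j, e j • x j = 0) ∧ (∀ j ∉ s, e j = 0) ∧
          ∃ j₀, j₀ ∈ s ∧ 0 < e j₀ := by
        set d' : ι → ℝ := fun j => if hj : j ∈ s then d ⟨j, hj⟩ else 0 with hd'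
        have hzero : ∀ j ∉ s, d' j = 0 := fun j hj => by simp [hd', hj]
        have hsum : ∑ j, d' j • x j = 0 := by
          rw [← Finset.sum_subset (Finset.subset_univ s)
            (fun j _ hj => by rw [hzero j hj, zero_smul])]
          rw [← Finset.sum_attach s (fun j => d' j • x j)]
          rw [← hd0]
          refine Finset.sum_congr rfl fun j _ => ?_
          simp [hd', j.2]
        rcases lt_or_ge 0 (d' i0.1) with hpos | hneg
        · exact ⟨d', hsum, hzero, i0.1, i0.2, hpos⟩
        · refine ⟨-d', by simpa using congrArg Neg.neg hsum, fun j hj => by simp [hzero j hj],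
            i0.1, i0.2, ?_⟩
          have : d' i0.1 ≠ 0 := by simpa [hd', i0.2] using hi0
          have h1 : d' i0.1 < 0 := lt_of_le_of_ne hneg this
          simpa using neg_pos.2 h1
      obtain ⟨e, hesum, hesupp, j₀', hj₀'s, hj₀'pos⟩ := key
      -- minimize lam j / e j over positive e j
      have hne : (s.filter (fun j => 0 < e j)).Nonempty :=
        ⟨j₀', Finset.mem_filter.2 ⟨hj₀'s, hj₀'pos⟩⟩
      obtain ⟨j₁, hj₁mem, hj₁min⟩ :=
        Finset.exists_min_image (s.filter (fun j => 0 < e j)) (fun j => lam j / e j) hne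
      obtain ⟨hj₁s, hj₁pos⟩ := Finset.mem_filter.1 hj₁mem
      set tstar := lam j₁ / e j₁ with htstar
      have htstar0 : 0 ≤ tstar := div_nonneg (hlam j₁) hj₁pos.le
      set mu : ι → ℝ := fun j => lam j - tstar * e j with hmu
      have hmu0 : ∀ j, 0 ≤ mu j := by
        intro j
        rcases lt_or_ge 0 (e j) with hpos | hneg
        · by_cases hjs : j ∈ s
          · have := hj₁min j (Finset.mem_filter.2 ⟨hjs, hpos⟩)
            simp only [hmu, sub_nonneg]
            calc tstar * e j ≤ (lam j / e j) * e j := by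
                  apply mul_le_mul_of_nonneg_right (hj₁min j (Finset.mem_filter.2 ⟨hjs, hpos⟩)) hpos.le
              _ = lam j := div_mul_cancel₀ _ hpos.ne'
          · simp [hmu, hesupp j hjs, hsupp j hjs]
        · simp only [hmu, sub_nonneg]
          calc tstar * e j ≤ 0 := mul_nonpos_of_nonneg_of_nonpos htstar0 hneg
            _ ≤ lam j := hlam j
      have hmuj₁ : mu j₁ = 0 := by
        simp [hmu, htstar, div_mul_cancel₀ _ hj₁pos.ne']
      have hmusupp : ∀ j ∉ s.erase j₁, mu j = 0 := by
        intro j hj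
        rw [Finset.mem_erase] at hj
        push_neg at hj
        by_cases hjj : j = j₁
        · exact hjj ▸ hmuj₁
        · have hjs := hj hjj
          simp [hmu, hsupp j hjs, hesupp j hjs]
      have hmusum : ∑ j, mu j • x j = ∑ j, lam j • x j := by
        simp only [hmu, sub_smul, Finset.sum_sub_distrib]
        have : ∑ j, (tstar * e j) • x j = 0 := by
          simp only [mul_smul, ← Finset.smul_sum, hesum, smul_zero]
        rw [this, sub_zero]
      obtain ⟨t, nu, h1, h2, h3, h4⟩ :=
        ih (s.erase j₁) (Finset.erase_ssubset hj₁s) mu hmu0 hmusupp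
      exact ⟨t, nu, h1, h2, h3, h4.trans hmusum⟩

lemma isClosed_coneOf {n : ℕ} {ι : Type*} [Fintype ι] [DecidableEq ι]
    (x : ι → (Fin n → ℝ)) : IsClosed (coneOf x) := by
  have hrep : coneOf x = ⋃ (t : Finset ι), ⋃ (_ : LinearIndependent ℝ (fun j : t => x j)),
      (fun mu : t → ℝ => ∑ j, mu j • x j.1) '' {mu | ∀ j, 0 ≤ mu j} := by
    ext b
    constructor
    · rintro ⟨lam, hlam, rfl⟩
      obtain ⟨t, mu, hli, hmu0, hmusupp, hmusum⟩ := carath_aux x Finset.univ lam hlam (by simp)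
      refine mem_iUnion.2 ⟨t, mem_iUnion.2 ⟨hli, ⟨fun j => mu j.1, fun j => hmu0 j.1, ?_⟩⟩⟩
      rw [← hmusum]
      rw [← Finset.sum_subset (Finset.subset_univ t)
        (fun j _ hj => by rw [hmusupp j hj, zero_smul])]
      rw [← Finset.sum_attach t (fun j => mu j • x j)]
      simp [Finset.univ_eq_attach]
    · intro hb
      rw [mem_iUnion] at hb
      obtain ⟨t, hb⟩ := hb
      rw [mem_iUnion] at hb
      obtain ⟨-, mu, hmu0, rfl⟩ := hb
      refine ⟨fun j => if hj : j ∈ t then mu ⟨j, hj⟩ else 0,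
        fun j => by by_cases hj : j ∈ t <;> simp [hj, hmu0 _], ?_⟩
      rw [← Finset.sum_subset (Finset.subset_univ t) (fun j _ hj => by simp [hj])]
      rw [← Finset.sum_attach t (fun j => (if hj : j ∈ t then mu ⟨j, hj⟩ else 0) • x j)]
      refine Finset.sum_congr rfl fun j _ => by simp [j.2]
  rw [hrep]
  refine isClosed_iUnion_of_finite fun t => isClosed_iUnion_of_finite fun hli => ?_
  have hker : LinearMap.ker (Fintype.linearCombination ℝ (fun j : t => x j)) = ⊥ := by
    rw [LinearMap.ker_eq_bot']
    intro mu hmu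
    exact funext (Fintype.linearIndependent_iff.1 hli mu
      (by simpa [Fintype.linearCombination_apply] using hmu))
  have hemb := LinearMap.isClosedEmbedding_of_injective hker
  have hcl : IsClosed {mu : t → ℝ | ∀ j, 0 ≤ mu j} := by
    have h2 : {mu : t → ℝ | ∀ j, 0 ≤ mu j} = ⋂ j, {mu | 0 ≤ mu j} := by
      ext; simp [mem_iInter]
    rw [h2]
    exact isClosed_iInter fun j => isClosed_le continuous_const (continuous_apply j)
  have himg := hemb.isClosedMap _ hcl
  have hfun : (fun mu : t → ℝ => ∑ j, mu j • x j.1)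
      = ⇑(Fintype.linearCombination ℝ (fun j : t => x j)) := by
    funext mu
    rw [Fintype.linearCombination_apply]
  rw [hfun]
  exact himg

lemma farkas_vector {n : ℕ} {ι : Type*} [Fintype ι] [DecidableEq ι]
    (x : ι → (Fin n → ℝ)) (b : Fin n → ℝ)
    (H : ∀ f : (Fin n → ℝ) →ₗ[ℝ] ℝ, (∀ j, f (x j) ≤ 0) → f b ≤ 0) : b ∈ coneOf x := by
  by_contra hb
  obtain ⟨f, u, hfa, hub⟩ :=
    geometric_hahn_banach_closed_point (convex_coneOf x) (isClosed_coneOf x) hb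
  have h0 : (0 : Fin n → ℝ) ∈ coneOf x := ⟨0, fun j => le_refl 0, by simp⟩
  have hu0 : 0 < u := by simpa using hfa 0 h0
  have hxj : ∀ j, f (x j) ≤ 0 := by
    intro j
    by_contra hpos
    push_neg at hpos
    have hmem : ((u + 1) / f (x j)) • x j ∈ coneOf x := by
      refine ⟨fun j' => if j' = j then (u + 1) / f (x j) else 0, ?_, ?_⟩
      · intro j'
        by_cases hj' : j' = j <;> simp [hj']
        positivity
      · rw [Finset.sum_congr rfl (fun j' _ => by
            rw [ite_smul, zero_smul] :
            ∀ j' ∈ Finset.univ, (fun j' => if j' = j then (u + 1) / f (x j) else 0) j' • x j'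
              = if j' = j then ((u + 1) / f (x j)) • x j' else 0)]
        rw [Finset.sum_ite_eq' Finset.univ j (fun j' => ((u + 1) / f (x j)) • x j')]
        simp
    have := hfa _ hmem
    rw [map_smul] at this
    have hne : f (x j) ≠ 0 := ne_of_gt hpos
    rw [smul_eq_mul, div_mul_cancel₀ _ hne] at this
    linarith
  have := H f.toLinearMap (by exact hxj)
  have hfb : f b ≤ 0 := this
  linarith

lemma farkasGen {W : Type*} [AddCommGroup W] [Module ℝ W] {N' : ℕ}
    (e : W ≃ₗ[ℝ] (Fin N' → ℝ)) {ι : Type*} [Fintype ι] [DecidableEq ι]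
    (x : ι → W) (b : W)
    (H : ∀ f : W →ₗ[ℝ] ℝ, (∀ j, f (x j) ≤ 0) → f b ≤ 0) :
    ∃ lam : ι → ℝ, (∀ j, 0 ≤ lam j) ∧ b = ∑ j, lam j • x j := by
  obtain ⟨lam, h0, hsum⟩ := farkas_vector (fun j => e (x j)) (e b)
    (fun f hf => H (f.comp e.toLinearMap) (by simpa using hf))
  refine ⟨lam, h0, ?_⟩
  apply e.injective
  rw [hsum, map_sum]
  simp only [map_smul]

/-- cons as linear equiv -/
noncomputable def consLEquiv (n : ℕ) : (ℝ × (Fin n → ℝ)) ≃ₗ[ℝ] (Fin (n + 1) → ℝ) where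
  toFun p := Fin.cons p.1 p.2
  invFun f := (f 0, Fin.tail f)
  map_add' p q := by
    funext i
    refine Fin.cases ?_ (fun i => ?_) i <;> simp
  map_smul' c p := by
    funext i
    refine Fin.cases ?_ (fun i => ?_) i <;> simp
  left_inv p := by simp
  right_inv f := by simp

/-- every linear functional on the dual of `Fin n → ℝ` is evaluation at a vector -/
lemma dual_eval {n : ℕ} (f : ((Fin n → ℝ) →ₗ[ℝ] ℝ) →ₗ[ℝ] ℝ) :
    ∃ vbar : Fin n → ℝ, ∀ u : (Fin n → ℝ) →ₗ[ℝ] ℝ, f u = u vbar := by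
  refine ⟨fun i => f (LinearMap.proj i), fun u => ?_⟩
  have hu : u = ∑ i, u (Pi.single i 1) • (LinearMap.proj i : (Fin n → ℝ) →ₗ[ℝ] ℝ) := by
    apply LinearMap.ext
    intro v
    rw [apply_eq_sum u v, LinearMap.sum_apply]
    refine Finset.sum_congr rfl fun i _ => ?_
    rw [LinearMap.smul_apply, LinearMap.proj_apply, smul_eq_mul, mul_comm]
  conv_lhs => rw [hu]
  rw [map_sum, apply_eq_sum u]
  refine Finset.sum_congr rfl fun i _ => ?_
  rw [map_smul, smul_eq_mul, mul_comm]

/-- Farkas infeasibility lemma -/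
lemma farkas_infeasible {n : ℕ} {ι : Type*} [Fintype ι] [DecidableEq ι]
    (g : ι → ((Fin n → ℝ) →ₗ[ℝ] ℝ)) (b : ι → ℝ)
    (hemp : ¬ ∃ w : Fin n → ℝ, ∀ γ, g γ w ≤ b γ) :
    ∃ lam : ι → ℝ, (∀ γ, 0 ≤ lam γ) ∧ (∑ γ, lam γ • g γ) = 0 ∧ (∑ γ, lam γ * b γ) = -1 := by
  set W := ((Fin n → ℝ) →ₗ[ℝ] ℝ) × ℝ
  let eD : ((Fin n → ℝ) →ₗ[ℝ] ℝ) ≃ₗ[ℝ] (Fin n → ℝ) := LinearEquiv.piRing ℝ ℝ (Fin n) ℝ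
  let e : W ≃ₗ[ℝ] (Fin (n + 1) → ℝ) :=
    ((eD.prodCongr (LinearEquiv.refl ℝ ℝ)).trans (LinearEquiv.prodComm ℝ _ _)).trans (consLEquiv n)
  have H : ∀ f : W →ₗ[ℝ] ℝ, (∀ γ, f (g γ, b γ) ≤ 0) → f ((0 : _), (-1 : ℝ)) ≤ 0 := by
    intro f hf
    obtain ⟨vbar, hvbar⟩ := dual_eval (f.comp (LinearMap.inl ℝ _ ℝ))
    set s := f (0, 1) with hs
    have hsplit : ∀ (u : (Fin n → ℝ) →ₗ[ℝ] ℝ) (t : ℝ), f (u, t) = u vbar + t * s := by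
      intro u t
      have : (u, t) = ((u, 0) : W) + t • ((0, 1) : W) := by
        simp [Prod.ext_iff]
      rw [this, map_add, map_smul, smul_eq_mul]
      have h1 : f ((u, 0) : W) = u vbar := hvbar u
      rw [h1]
    have hs0 : 0 ≤ s := by
      by_contra hneg
      push_neg at hneg
      apply hemp
      refine ⟨(-s)⁻¹ • vbar, fun γ => ?_⟩
      have hγ := hf γ
      rw [hsplit] at hγ
      have hpos : 0 < -s := neg_pos.2 hneg
      rw [map_smul, smul_eq_mul]
      rw [inv_mul_le_iff₀ hpos]
      nlinarith [hγ]
    rw [hsplit]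
    simp
    linarith
  obtain ⟨lam, hlam0, hlamsum⟩ := farkasGen e (fun γ => ((g γ, b γ) : W)) ((0 : _), (-1 : ℝ)) H
  refine ⟨lam, hlam0, ?_, ?_⟩
  · have := congrArg Prod.fst hlamsum
    rw [Prod.fst_sum] at this
    exact this.symm
  · have := congrArg Prod.snd hlamsum
    rw [Prod.snd_sum] at this
    simp only [Prod.smul_snd, smul_eq_mul] at this
    exact this.symm

lemma exact_point {n m : ℕ} {ι : Type*} [Fintype ι] [DecidableEq ι]
    (a : Fin m → ((Fin n → ℝ) →ₗ[ℝ] ℝ)) (c : Fin m → ℝ)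
    (φ : ι → ((Fin n → ℝ) →ₗ[ℝ] ℝ)) (r : ι → ℝ)
    (v : ℕ → (Fin n → ℝ)) (hv : ∀ k i, a i (v k) ≤ c i)
    (hφ : ∀ α, Tendsto (fun k => φ α (v k)) atTop (nhds (r α))) :
    ∃ p, (∀ i, a i p ≤ c i) ∧ ∀ α, φ α p = r α := by
  by_contra hno
  have hemp : ¬ ∃ w : Fin n → ℝ, ∀ γ : Fin m ⊕ ι ⊕ ι,
      (Sum.elim a (Sum.elim φ (fun α => -φ α)) γ) w
        ≤ (Sum.elim c (Sum.elim r (fun α => -r α)) γ) := by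
    rintro ⟨w, hw⟩
    apply hno
    refine ⟨w, fun i => hw (Sum.inl i), fun α => le_antisymm (hw (Sum.inr (Sum.inl α))) ?_⟩
    have := hw (Sum.inr (Sum.inr α))
    simpa using this
  obtain ⟨lam, hlam0, hfun, hscal⟩ := farkas_infeasible _ _ hemp
  -- evaluate the functional identity at `v k`
  have heval : ∀ k, (∑ i, lam (Sum.inl i) * a i (v k))
      + ∑ α, (lam (Sum.inr (Sum.inl α)) - lam (Sum.inr (Sum.inr α))) * φ α (v k) = 0 := by
    intro k
    have := congrArg (fun (F : (Fin n → ℝ) →ₗ[ℝ] ℝ) => F (v k)) hfun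
    simp only [LinearMap.sum_apply, LinearMap.smul_apply, smul_eq_mul, LinearMap.zero_apply] at this
    rw [Fintype.sum_sum_type, Fintype.sum_sum_type] at this
    simp only [Sum.elim_inl, Sum.elim_inr, LinearMap.neg_apply] at this
    have e1 : ∑ α, (lam (Sum.inr (Sum.inl α)) - lam (Sum.inr (Sum.inr α))) * φ α (v k)
        = ∑ α, lam (Sum.inr (Sum.inl α)) * φ α (v k)
          - ∑ α, lam (Sum.inr (Sum.inr α)) * φ α (v k) := by
      rw [← Finset.sum_sub_distrib]
      exact Finset.sum_congr rfl fun α _ => by ring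
    have e2 : ∑ α, lam (Sum.inr (Sum.inr α)) * -(φ α (v k))
        = - ∑ α, lam (Sum.inr (Sum.inr α)) * φ α (v k) := by
      rw [← Finset.sum_neg_distrib]
      exact Finset.sum_congr rfl fun α _ => by ring
    rw [e2] at this
    rw [e1]
    linarith
  have hscal' : (∑ i, lam (Sum.inl i) * c i)
      + ∑ α, (lam (Sum.inr (Sum.inl α)) - lam (Sum.inr (Sum.inr α))) * r α = -1 := by
    rw [Fintype.sum_sum_type, Fintype.sum_sum_type] at hscal
    simp only [Sum.elim_inl, Sum.elim_inr] at hscal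
    have e1 : ∑ α, (lam (Sum.inr (Sum.inl α)) - lam (Sum.inr (Sum.inr α))) * r α
        = ∑ α, lam (Sum.inr (Sum.inl α)) * r α - ∑ α, lam (Sum.inr (Sum.inr α)) * r α := by
      rw [← Finset.sum_sub_distrib]
      exact Finset.sum_congr rfl fun α _ => by ring
    have e2 : ∑ α, lam (Sum.inr (Sum.inr α)) * -(r α)
        = - ∑ α, lam (Sum.inr (Sum.inr α)) * r α := by
      rw [← Finset.sum_neg_distrib]
      exact Finset.sum_congr rfl fun α _ => by ring
    rw [e2] at hscal
    rw [e1]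
    linarith
  set C := ∑ i, lam (Sum.inl i) * c i with hC
  set q : ℕ → ℝ := fun k => ∑ α, (lam (Sum.inr (Sum.inl α)) - lam (Sum.inr (Sum.inr α))) * φ α (v k)
    with hq
  have hqt : Tendsto q atTop (nhds (∑ α, (lam (Sum.inr (Sum.inl α)) - lam (Sum.inr (Sum.inr α))) * r α)) := by
    apply tendsto_finset_sum
    intro α _
    exact (hφ α).const_mul _
  have hnonneg : ∀ k, 0 ≤ C + q k := by
    intro k
    have h1 := heval k
    have h2 : ∑ i, lam (Sum.inl i) * a i (v k) ≤ C := by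
      rw [hC]
      exact Finset.sum_le_sum fun i _ => mul_le_mul_of_nonneg_left (hv k i) (hlam0 _)
    linarith
  have hlim : Tendsto (fun k => C + q k) atTop (nhds (-1 : ℝ)) := by
    rw [← hscal']
    exact hqt.const_add C
  have hev := hlim.eventually_lt_const (by norm_num : (-1 : ℝ) < 0)
  obtain ⟨k, hk⟩ := hev.exists
  exact absurd (hnonneg k) (not_le.2 hk)

lemma rec_direction {n m : ℕ} {ι κ : Type*} [Fintype ι] [DecidableEq ι] [Fintype κ] [DecidableEq κ]
    (a : Fin m → ((Fin n → ℝ) →ₗ[ℝ] ℝ)) (c : Fin m → ℝ)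
    (φ : ι → ((Fin n → ℝ) →ₗ[ℝ] ℝ)) (r : ι → ℝ)
    (ψ : κ → ((Fin n → ℝ) →ₗ[ℝ] ℝ))
    (v : ℕ → (Fin n → ℝ)) (hv : ∀ k i, a i (v k) ≤ c i)
    (hφ : ∀ α, Tendsto (fun k => φ α (v k)) atTop (nhds (r α)))
    (hψ : ∀ β, Tendsto (fun k => ψ β (v k)) atTop atBot) :
    ∃ w, (∀ i, a i w ≤ 0) ∧ (∀ α, φ α w = 0) ∧ (∀ β, ψ β w ≤ -1) := by
  by_contra hno
  have hemp : ¬ ∃ w : Fin n → ℝ, ∀ γ : Fin m ⊕ ι ⊕ ι ⊕ κ,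
      (Sum.elim a (Sum.elim φ (Sum.elim (fun α => -φ α) ψ)) γ) w
        ≤ (Sum.elim (fun _ => (0:ℝ)) (Sum.elim (fun _ => (0:ℝ)) (Sum.elim (fun _ => (0:ℝ)) (fun _ => (-1:ℝ)))) γ) := by
    rintro ⟨w, hw⟩
    apply hno
    refine ⟨w, fun i => hw (Sum.inl i), fun α => le_antisymm (hw (Sum.inr (Sum.inl α))) ?_,
      fun β => hw (Sum.inr (Sum.inr (Sum.inr β)))⟩
    have := hw (Sum.inr (Sum.inr (Sum.inl α)))
    simpa using this
  obtain ⟨lam, hlam0, hfun, hscal⟩ := farkas_infeasible _ _ hemp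
  set l1 : Fin m → ℝ := fun i => lam (Sum.inl i)
  set l2 : ι → ℝ := fun α => lam (Sum.inr (Sum.inl α))
  set l3 : ι → ℝ := fun α => lam (Sum.inr (Sum.inr (Sum.inl α)))
  set l4 : κ → ℝ := fun β => lam (Sum.inr (Sum.inr (Sum.inr β)))
  have hscal' : ∑ β, l4 β = 1 := by
    rw [Fintype.sum_sum_type, Fintype.sum_sum_type, Fintype.sum_sum_type] at hscal
    simp only [Sum.elim_inl, Sum.elim_inr, mul_zero, Finset.sum_const_zero, mul_neg, mul_one,
      zero_add] at hscal
    have : - ∑ β, l4 β = -1 := by rw [← Finset.sum_neg_distrib]; exact hscal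
    linarith
  have heval : ∀ k, (∑ i, l1 i * a i (v k)) + (∑ α, (l2 α - l3 α) * φ α (v k))
      + ∑ β, l4 β * ψ β (v k) = 0 := by
    intro k
    have := congrArg (fun (F : (Fin n → ℝ) →ₗ[ℝ] ℝ) => F (v k)) hfun
    simp only [LinearMap.sum_apply, LinearMap.smul_apply, smul_eq_mul, LinearMap.zero_apply] at this
    rw [Fintype.sum_sum_type, Fintype.sum_sum_type, Fintype.sum_sum_type] at this
    simp only [Sum.elim_inl, Sum.elim_inr, LinearMap.neg_apply] at this
    have e1 : ∑ α, (l2 α - l3 α) * φ α (v k)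
        = ∑ α, l2 α * φ α (v k) - ∑ α, l3 α * φ α (v k) := by
      rw [← Finset.sum_sub_distrib]
      exact Finset.sum_congr rfl fun α _ => by ring
    have e2 : ∑ α, l3 α * -(φ α (v k)) = - ∑ α, l3 α * φ α (v k) := by
      rw [← Finset.sum_neg_distrib]
      exact Finset.sum_congr rfl fun α _ => by ring
    rw [e2] at this
    rw [e1]
    linarith
  set C := ∑ i, l1 i * c i with hC
  set q : ℕ → ℝ := fun k => ∑ α, (l2 α - l3 α) * φ α (v k) with hq
  set t : ℕ → ℝ := fun k => ∑ β, l4 β * ψ β (v k) with ht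
  have hqt : Tendsto q atTop (nhds (∑ α, (l2 α - l3 α) * r α)) :=
    tendsto_finset_sum _ fun α _ => (hφ α).const_mul _
  have htt : Tendsto t atTop atBot := by
    rw [tendsto_atBot]
    intro Y
    have hY : ∀ᶠ k in atTop, ∀ β, ψ β (v k) ≤ min Y 0 := by
      rw [eventually_all]
      exact fun β => (tendsto_atBot.1 (hψ β)) (min Y 0)
    refine hY.mono fun k hk => ?_
    have : t k ≤ ∑ β, l4 β * min Y 0 :=
      Finset.sum_le_sum fun β _ => mul_le_mul_of_nonneg_left (hk β) (hlam0 _)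
    rw [← Finset.sum_mul, hscal', one_mul] at this
    exact this.trans (min_le_left _ _)
  have hnonneg : ∀ k, 0 ≤ C + q k + t k := by
    intro k
    have h1 := heval k
    have h2 : ∑ i, l1 i * a i (v k) ≤ C :=
      Finset.sum_le_sum fun i _ => mul_le_mul_of_nonneg_left (hv k i) (hlam0 _)
    linarith
  have hlim : Tendsto (fun k => C + q k + t k) atTop atBot := by
    exact (hqt.const_add C).add_atBot htt
  obtain ⟨k, hk⟩ := ((tendsto_atBot.1 hlim) (-1)).exists
  have := hnonneg k
  linarith


section ERealHelpers

lemma esum_ne_top {ι : Type*} (s : Finset ι) (x : ι → EReal) (hx : ∀ j ∈ s, x j ≠ ⊤) :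
    ∑ j ∈ s, x j ≠ ⊤ := by
  classical
  induction s using Finset.induction_on with
  | empty => simp
  | insert _ _ hj ih =>
    rename_i a s'
    rw [Finset.sum_insert hj]
    exact (EReal.add_lt_top (hx a (Finset.mem_insert_self a s'))
      (ih (fun j hjs => hx j (Finset.mem_insert_of_mem hjs)))).ne

lemma esum_eq_bot_iff {ι : Type*} (s : Finset ι) (x : ι → EReal) :
    ∑ j ∈ s, x j = ⊥ ↔ ∃ j ∈ s, x j = ⊥ := by
  classical
  induction s using Finset.induction_on with
  | empty => simp
  | insert _ _ hj ih =>
    rw [Finset.sum_insert hj, EReal.add_eq_bot_iff, ih]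
    aesop

lemma esum_toReal {ι : Type*} (s : Finset ι) (x : ι → EReal)
    (hx : ∀ j ∈ s, x j ≠ ⊤ ∧ x j ≠ ⊥) :
    (∑ j ∈ s, x j).toReal = ∑ j ∈ s, (x j).toReal := by
  classical
  induction s using Finset.induction_on with
  | empty => simp
  | insert _ _ hj ih =>
    rename_i a s'
    rw [Finset.sum_insert hj, Finset.sum_insert hj,
      EReal.toReal_add (hx a (Finset.mem_insert_self a s')).1 (hx a (Finset.mem_insert_self a s')).2
        (esum_ne_top s' x ?hne) ?hnb]
    · rw [ih (fun j hjs => hx j (Finset.mem_insert_of_mem hjs))]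
    case hne => exact fun j hjs => (hx j (Finset.mem_insert_of_mem hjs)).1
    case hnb =>
      rw [Ne, esum_eq_bot_iff]
      rintro ⟨j, hjs, hjb⟩
      exact (hx j (Finset.mem_insert_of_mem hjs)).2 hjb

end ERealHelpers

section DualConeHelpers

variable {n : ℕ} {σ₀ : Set (Fin n → ℝ)}

lemma dualCone_zero : (0 : (Fin n → ℝ) →ₗ[ℝ] ℝ) ∈ dualCone σ₀ := fun v _ => le_refl 0

lemma dualCone_smul {t : ℝ} (ht : 0 ≤ t) {u : (Fin n → ℝ) →ₗ[ℝ] ℝ} (hu : u ∈ dualCone σ₀) :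
    t • u ∈ dualCone σ₀ := fun v hv => by
  rw [LinearMap.smul_apply, smul_eq_mul]
  exact mul_nonpos_of_nonneg_of_nonpos ht (hu v hv)

lemma dualCone_sum {ι : Type*} (s : Finset ι) (f : ι → ((Fin n → ℝ) →ₗ[ℝ] ℝ))
    (hf : ∀ j ∈ s, f j ∈ dualCone σ₀) : (∑ j ∈ s, f j) ∈ dualCone σ₀ := fun v hv => by
  rw [LinearMap.sum_apply]
  exact Finset.sum_nonpos fun j hj => hf j hj v hv

lemma gen_mem_dualCone {m : ℕ} {uG : Fin m → ((Fin n → ℝ) →ₗ[ℝ] ℝ)}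
    (hσ : σ₀ = ⋂ j, {v | uG j v ≤ 0}) (j : Fin m) : uG j ∈ dualCone σ₀ := by
  intro v hv
  rw [hσ] at hv
  exact mem_iInter.1 hv j

lemma dual_rep {m : ℕ} {uG : Fin m → ((Fin n → ℝ) →ₗ[ℝ] ℝ)}
    (hσ : σ₀ = ⋂ j, {v | uG j v ≤ 0}) {u : (Fin n → ℝ) →ₗ[ℝ] ℝ} (hu : u ∈ dualCone σ₀) :
    ∃ μ : Fin m → ℝ, (∀ j, 0 ≤ μ j) ∧ u = ∑ j, μ j • uG j := by
  apply farkasGen (LinearEquiv.piRing ℝ ℝ (Fin n) ℝ) uG u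
  intro f hf
  obtain ⟨vbar, hvbar⟩ := dual_eval f
  have hvσ : vbar ∈ σ₀ := by
    rw [hσ, mem_iInter]
    intro j
    have := hf j
    rwa [hvbar (uG j)] at this
  rw [hvbar u]
  exact hu vbar hvσ

end DualConeHelpers

section ERealMul

lemma coe_mul_ne_top {t : ℝ} (ht : 0 ≤ t) {x : EReal} (hx : x ≠ ⊤) : (t : EReal) * x ≠ ⊤ := by
  rcases eq_or_lt_of_le ht with h0 | hpos
  · rw [← h0]
    simp
  · induction x with
    | bot =>
      rw [EReal.coe_mul_bot_of_pos hpos]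
      simp
    | coe y => simp [← EReal.coe_mul]
    | top => exact absurd rfl hx

lemma coe_mul_eq_bot {t : ℝ} (ht : 0 ≤ t) {x : EReal} :
    (t : EReal) * x = ⊥ ↔ (0 < t ∧ x = ⊥) := by
  constructor
  · intro hb
    rcases eq_or_lt_of_le ht with h0 | hpos
    · rw [← h0] at hb
      simp at hb
    · refine ⟨hpos, ?_⟩
      induction x with
      | bot => rfl
      | coe y => rw [← EReal.coe_mul] at hb; exact absurd hb (EReal.coe_ne_bot _)
      | top =>
        rw [EReal.mul_top_of_pos (by exact_mod_cast hpos)] at hb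
        exact absurd hb (by simp)
  · rintro ⟨hpos, rfl⟩
    exact EReal.coe_mul_bot_of_pos hpos

end ERealMul

section NRextHelpers

variable {n : ℕ} {σ₀ : Set (Fin n → ℝ)} {h : ↥(dualCone σ₀) → EReal}

lemma nr_sum (hN : h ∈ NRext σ₀) {ι : Type*} [DecidableEq ι] (s : Finset ι)
    (f : ι → ↥(dualCone σ₀)) :
    ∀ (S : ↥(dualCone σ₀)), ((S : (Fin n → ℝ) →ₗ[ℝ] ℝ) = ∑ j ∈ s, (f j : (Fin n → ℝ) →ₗ[ℝ] ℝ)) →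
    h S = ∑ j ∈ s, h (f j) := by
  induction s using Finset.induction_on with
  | empty =>
    intro S hS
    rw [Finset.sum_empty] at hS
    rw [Finset.sum_empty, hN.2.1 S hS]
  | insert _ _ hj ih =>
    rename_i a s'
    intro S hS
    set rest : ↥(dualCone σ₀) := ⟨∑ j ∈ s', (f j : (Fin n → ℝ) →ₗ[ℝ] ℝ),
      dualCone_sum s' _ (fun j _ => (f j).2)⟩ with hrest
    rw [Finset.sum_insert hj] at hS
    rw [Finset.sum_insert hj, hN.2.2.1 (f a) rest S hS, ih rest rfl]

lemma nr_smul (hN : h ∈ NRext σ₀) (t : ℝ) (ht : 0 ≤ t) (u S : ↥(dualCone σ₀))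
    (hS : (S : (Fin n → ℝ) →ₗ[ℝ] ℝ) = t • (u : (Fin n → ℝ) →ₗ[ℝ] ℝ)) :
    h S = (t : EReal) * h u := by
  rcases eq_or_lt_of_le ht with h0 | hpos
  · rw [← h0] at hS ⊢
    rw [zero_smul] at hS
    rw [hN.2.1 S hS]
    simp
  · exact hN.2.2.2 t hpos u S hS

lemma nr_rep (hN : h ∈ NRext σ₀) {m : ℕ} (uG : Fin m → ((Fin n → ℝ) →ₗ[ℝ] ℝ))
    (hgen : ∀ j, uG j ∈ dualCone σ₀) (μ : Fin m → ℝ) (hμ : ∀ j, 0 ≤ μ j)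
    (u : ↥(dualCone σ₀)) (hu : (u : (Fin n → ℝ) →ₗ[ℝ] ℝ) = ∑ j, μ j • uG j) :
    h u = ∑ j, (μ j : EReal) * h ⟨uG j, hgen j⟩ := by
  rw [nr_sum hN Finset.univ (fun j => ⟨μ j • uG j, dualCone_smul (hμ j) (hgen j)⟩) u hu]
  exact Finset.sum_congr rfl fun j _ => nr_smul hN (μ j) (hμ j) ⟨uG j, hgen j⟩ _ rfl

end NRextHelpers

section Extraction

variable {n : ℕ} {σ₀ : Set (Fin n → ℝ)}

lemma exists_approx_seq {m : ℕ} {uG : Fin m → ((Fin n → ℝ) →ₗ[ℝ] ℝ)}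
    (hσ : σ₀ = ⋂ j, {v | uG j v ≤ 0}) {h : ↥(dualCone σ₀) → EReal} (hN : h ∈ NRext σ₀)
    {P : Set (Fin n → ℝ)} (hcl : h ∈ closure (iotaTrop σ₀ '' P)) :
    ∃ v : ℕ → (Fin n → ℝ), (∀ k, v k ∈ P) ∧
      (∀ j, h ⟨uG j, gen_mem_dualCone hσ j⟩ ≠ ⊥ →
        Tendsto (fun k => uG j (v k)) atTop (nhds (h ⟨uG j, gen_mem_dualCone hσ j⟩).toReal)) ∧
      (∀ j, h ⟨uG j, gen_mem_dualCone hσ j⟩ = ⊥ →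
        Tendsto (fun k => uG j (v k)) atTop atBot) := by
  classical
  set uS : Fin m → ↥(dualCone σ₀) := fun j => ⟨uG j, gen_mem_dualCone hσ j⟩ with huS
  have key : ∀ k : ℕ, ∃ vv, vv ∈ P ∧ ∀ j,
      (h (uS j) = ⊥ → uG j vv < -(k : ℝ)) ∧
      (h (uS j) ≠ ⊥ → |uG j vv - (h (uS j)).toReal| < ((k : ℝ) + 1)⁻¹) := by
    intro k
    set O : Fin m → Set EReal := fun j =>
      if h (uS j) = ⊥ then Iio ((-(k : ℝ) : ℝ) : EReal)
      else Ioo (((h (uS j)).toReal - ((k : ℝ) + 1)⁻¹ : ℝ) : EReal)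
               (((h (uS j)).toReal + ((k : ℝ) + 1)⁻¹ : ℝ) : EReal) with hO
    have hδ : (0 : ℝ) < ((k : ℝ) + 1)⁻¹ := by positivity
    have hOopen : ∀ j, IsOpen (O j) := by
      intro j
      by_cases hb : h (uS j) = ⊥
      · rw [hO]; simp only [if_pos hb]; exact isOpen_Iio
      · rw [hO]; simp only [if_neg hb]; exact isOpen_Ioo
    have hOmem : ∀ j, h (uS j) ∈ O j := by
      intro j
      by_cases hb : h (uS j) = ⊥
      · rw [hO]; simp only [if_pos hb]; rw [hb]; exact EReal.bot_lt_coe _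
      · rw [hO]; simp only [if_neg hb]
        have hco : ((h (uS j)).toReal : EReal) = h (uS j) := EReal.coe_toReal (hN.1 _) hb
        constructor
        · exact lt_of_lt_of_eq (EReal.coe_lt_coe_iff.2 (by linarith)) hco
        · exact lt_of_eq_of_lt hco.symm (EReal.coe_lt_coe_iff.2 (by linarith))
    have hnbhd : (⋂ j, (fun g : ↥(dualCone σ₀) → EReal => g (uS j)) ⁻¹' (O j)) ∈ nhds h := by
      refine Filter.iInter_mem.2 fun j => ?_
      exact ((hOopen j).preimage (continuous_apply (uS j))).mem_nhds (hOmem j)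
    obtain ⟨g, hgN, hgim⟩ := mem_closure_iff_nhds.1 hcl _ hnbhd
    obtain ⟨vv, hvvP, hgeq⟩ := hgim
    refine ⟨vv, hvvP, fun j => ?_⟩
    have hgj : g (uS j) ∈ O j := mem_iInter.1 hgN j
    rw [← hgeq] at hgj
    have hval : iotaTrop σ₀ vv (uS j) = ((uG j vv : ℝ) : EReal) := rfl
    rw [hval] at hgj
    constructor
    · intro hb
      rw [hO] at hgj
      simp only [if_pos hb] at hgj
      exact EReal.coe_lt_coe_iff.1 hgj
    · intro hb
      rw [hO] at hgj
      simp only [if_neg hb] at hgj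
      obtain ⟨h1, h2⟩ := hgj
      rw [abs_lt]
      exact ⟨by linarith [EReal.coe_lt_coe_iff.1 h1], by linarith [EReal.coe_lt_coe_iff.1 h2]⟩
  choose v hvP hvO using key
  refine ⟨v, hvP, fun j hb => ?_, fun j hb => ?_⟩
  · have hinv : Tendsto (fun k : ℕ => ((k : ℝ) + 1)⁻¹) atTop (nhds 0) := by
      have := tendsto_one_div_add_atTop_nhds_zero_nat (𝕜 := ℝ)
      simpa [one_div] using this
    set r := (h (uS j)).toReal
    have hlb : ∀ k : ℕ, r - ((k : ℝ) + 1)⁻¹ ≤ uG j (v k) := by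
      intro k
      have := (hvO k j).2 hb
      rw [abs_lt] at this
      linarith [this.1]
    have hub : ∀ k : ℕ, uG j (v k) ≤ r + ((k : ℝ) + 1)⁻¹ := by
      intro k
      have := (hvO k j).2 hb
      rw [abs_lt] at this
      linarith [this.2]
    have h1 : Tendsto (fun k : ℕ => r - ((k : ℝ) + 1)⁻¹) atTop (nhds r) := by
      have := (tendsto_const_nhds (x := r) (f := atTop (α := ℕ))).sub hinv
      simpa using this
    have h2 : Tendsto (fun k : ℕ => r + ((k : ℝ) + 1)⁻¹) atTop (nhds r) := by
      have := (tendsto_const_nhds (x := r) (f := atTop (α := ℕ))).add hinv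
      simpa using this
    exact tendsto_of_tendsto_of_tendsto_of_le_of_le h1 h2 hlb hub
  · refine tendsto_atBot_mono (fun k => le_of_lt ((hvO k j).1 hb)) ?_
    exact tendsto_neg_atTop_atBot.comp tendsto_natCast_atTop_atTop

end Extraction

section LemmaA

lemma lemmaA {n : ℕ} {σ₀ : Set (Fin n → ℝ)} {m : ℕ} {uG : Fin m → ((Fin n → ℝ) →ₗ[ℝ] ℝ)}
    (hσ : σ₀ = ⋂ j, {v | uG j v ≤ 0}) {h : ↥(dualCone σ₀) → EReal} (hN : h ∈ NRext σ₀)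
    (Jg : Finset (Fin m)) (hJg : ∀ j, j ∈ Jg ↔ h ⟨uG j, gen_mem_dualCone hσ j⟩ ≠ ⊥)
    (u₀ : (Fin n → ℝ) →ₗ[ℝ] ℝ) (hu₀ : u₀ = ∑ j ∈ Jg, uG j)
    {P : Set (Fin n → ℝ)} (hP : IsPolyhedron P) (hcl : h ∈ closure (iotaTrop σ₀ '' P)) :
    ∃ p w, p ∈ P ∧ (∀ t : ℝ, 0 ≤ t → ∀ x ∈ P, x + t • w ∈ P) ∧ w ∈ σ₀ ∧
      (∀ uu : ↥(dualCone σ₀), h uu ≠ ⊥ →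
        (uu : (Fin n → ℝ) →ₗ[ℝ] ℝ) p = (h uu).toReal ∧ (uu : (Fin n → ℝ) →ₗ[ℝ] ℝ) w = 0) ∧
      (∀ uu : ↥(dualCone σ₀), h uu = ⊥ → (uu : (Fin n → ℝ) →ₗ[ℝ] ℝ) w < 0) ∧
      w ∈ intrinsicInterior ℝ (σ₀ ∩ {x | u₀ x = 0}) := by
  classical
  obtain ⟨mP, aP, cP, hPdef⟩ := hP
  obtain ⟨v, hvP, htfin, htbot⟩ := exists_approx_seq hσ hN hcl
  set uS : Fin m → ↥(dualCone σ₀) := fun j => ⟨uG j, gen_mem_dualCone hσ j⟩ with huS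
  set φ : ↥Jg → ((Fin n → ℝ) →ₗ[ℝ] ℝ) := fun j => uG j.1 with hφ
  set rr : ↥Jg → ℝ := fun j => (h (uS j.1)).toReal with hrr
  set ψ : ↥(Finset.univ \ Jg) → ((Fin n → ℝ) →ₗ[ℝ] ℝ) := fun j => uG j.1 with hψ
  have hv' : ∀ k i, aP i (v k) ≤ cP i := by
    intro k i
    have := hvP k
    rw [hPdef] at this
    exact mem_iInter.1 this i
  have hφt : ∀ α : ↥Jg, Tendsto (fun k => φ α (v k)) atTop (nhds (rr α)) :=
    fun α => htfin α.1 ((hJg α.1).1 α.2)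
  have hψt : ∀ β : ↥(Finset.univ \ Jg), Tendsto (fun k => ψ β (v k)) atTop atBot := by
    intro β
    have hβ := β.2
    rw [Finset.mem_sdiff] at hβ
    refine htbot β.1 ?_
    by_contra hne
    exact hβ.2 ((hJg β.1).2 hne)
  obtain ⟨p, hpa, hpφ⟩ := exact_point aP cP φ rr v hv' hφt
  obtain ⟨w, hwa, hwφ, hwψ⟩ := rec_direction aP cP φ rr ψ v hv' hφt hψt
  have hpP : p ∈ P := by rw [hPdef]; exact mem_iInter.2 hpa
  have hrec : ∀ t : ℝ, 0 ≤ t → ∀ x ∈ P, x + t • w ∈ P := by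
    intro t ht x hx
    rw [hPdef] at hx ⊢
    rw [mem_iInter] at hx
    rw [mem_iInter]
    intro i
    have h1 : aP i (x + t • w) = aP i x + t * aP i w := by
      rw [map_add, map_smul, smul_eq_mul]
    have h2 : t * aP i w ≤ 0 := mul_nonpos_of_nonneg_of_nonpos ht (hwa i)
    have h3 : aP i x ≤ cP i := hx i
    simp only [mem_setOf_eq] at h3 ⊢
    rw [h1]
    linarith
  have hgen_p : ∀ j ∈ Jg, uG j p = (h (uS j)).toReal := fun j hj => hpφ ⟨j, hj⟩
  have hgen_w0 : ∀ j ∈ Jg, uG j w = 0 := fun j hj => hwφ ⟨j, hj⟩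
  have hgen_wneg : ∀ j ∉ Jg, uG j w ≤ -1 := fun j hj =>
    hwψ ⟨j, Finset.mem_sdiff.2 ⟨Finset.mem_univ j, hj⟩⟩
  have hgen_wle : ∀ j, uG j w ≤ 0 := by
    intro j
    by_cases hj : j ∈ Jg
    · rw [hgen_w0 j hj]
    · linarith [hgen_wneg j hj]
  have hwσ : w ∈ σ₀ := by
    rw [hσ, mem_iInter]
    exact fun j => hgen_wle j
  have main : ∀ uu : ↥(dualCone σ₀),
      (h uu ≠ ⊥ → (uu : (Fin n → ℝ) →ₗ[ℝ] ℝ) p = (h uu).toReal ∧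
        (uu : (Fin n → ℝ) →ₗ[ℝ] ℝ) w = 0) ∧
      (h uu = ⊥ → (uu : (Fin n → ℝ) →ₗ[ℝ] ℝ) w < 0) := by
    intro uu
    obtain ⟨μ, hμ0, hμrep⟩ := dual_rep hσ uu.2
    have hrep := nr_rep hN uG (gen_mem_dualCone hσ) μ hμ0 uu hμrep
    have hterm_ne_top : ∀ j : Fin m, (μ j : EReal) * h (uS j) ≠ ⊤ :=
      fun j => coe_mul_ne_top (hμ0 j) (hN.1 _)
    have happ_p : (uu : (Fin n → ℝ) →ₗ[ℝ] ℝ) p = ∑ j, μ j * uG j p := by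
      rw [hμrep, LinearMap.sum_apply]
      exact Finset.sum_congr rfl fun j _ => by rw [LinearMap.smul_apply, smul_eq_mul]
    have happ_w : (uu : (Fin n → ℝ) →ₗ[ℝ] ℝ) w = ∑ j, μ j * uG j w := by
      rw [hμrep, LinearMap.sum_apply]
      exact Finset.sum_congr rfl fun j _ => by rw [LinearMap.smul_apply, smul_eq_mul]
    constructor
    · intro hne
      have hterms_ne_bot : ∀ j, (μ j : EReal) * h (uS j) ≠ ⊥ := by
        intro j hbot
        apply hne
        rw [hrep, esum_eq_bot_iff]
        exact ⟨j, Finset.mem_univ j, hbot⟩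
      have hkey : ∀ j, μ j ≠ 0 → j ∈ Jg := by
        intro j hμj
        rw [hJg]
        intro hbot
        exact hterms_ne_bot j
          ((coe_mul_eq_bot (hμ0 j)).2 ⟨lt_of_le_of_ne (hμ0 j) (Ne.symm hμj), hbot⟩)
      constructor
      · rw [happ_p, hrep, esum_toReal _ _ (fun j _ => ⟨hterm_ne_top j, hterms_ne_bot j⟩)]
        refine Finset.sum_congr rfl fun j _ => ?_
        by_cases hμj : μ j = 0
        · simp [hμj]
        · rw [EReal.toReal_mul, EReal.toReal_coe, hgen_p j (hkey j hμj)]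
      · rw [happ_w]
        refine Finset.sum_eq_zero fun j _ => ?_
        by_cases hμj : μ j = 0
        · simp [hμj]
        · rw [hgen_w0 j (hkey j hμj), mul_zero]
    · intro hbot
      rw [hrep, esum_eq_bot_iff] at hbot
      obtain ⟨j₀, -, hj₀⟩ := hbot
      obtain ⟨hμpos, hbot'⟩ := (coe_mul_eq_bot (hμ0 j₀)).1 hj₀
      have hj₀Jg : j₀ ∉ Jg := fun hmem => ((hJg j₀).1 hmem) hbot'
      have hterm_le : ∀ j, μ j * uG j w ≤ 0 :=
        fun j => mul_nonpos_of_nonneg_of_nonpos (hμ0 j) (hgen_wle j)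
      have hsingle : μ j₀ * uG j₀ w + ∑ j ∈ Finset.univ.erase j₀, μ j * uG j w
          = ∑ j, μ j * uG j w :=
        Finset.add_sum_erase Finset.univ (fun j => μ j * uG j w) (Finset.mem_univ j₀)
      have hrest : ∑ j ∈ Finset.univ.erase j₀, μ j * uG j w ≤ 0 :=
        Finset.sum_nonpos fun j _ => hterm_le j
      have hj₀term : μ j₀ * uG j₀ w ≤ μ j₀ * (-1) :=
        mul_le_mul_of_nonneg_left (hgen_wneg j₀ hj₀Jg) (hμ0 j₀)
      rw [happ_w, ← hsingle]
      nlinarith [hμpos, hrest, hj₀term]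
  -- intrinsic interior
  set τ := σ₀ ∩ {x | u₀ x = 0} with hτ
  have hwτ : w ∈ τ := by
    refine ⟨hwσ, ?_⟩
    rw [mem_setOf_eq, hu₀, LinearMap.sum_apply]
    exact Finset.sum_eq_zero fun j hj => hgen_w0 j hj
  have hker : ∀ x ∈ Submodule.span ℝ τ, ∀ j ∈ Jg, uG j x = 0 := by
    intro x hx j hj
    have hle : Submodule.span ℝ τ ≤ LinearMap.ker (uG j) := by
      rw [Submodule.span_le]
      intro y hy
      rw [SetLike.mem_coe, LinearMap.mem_ker]
      have hy0 : u₀ y = 0 := hy.2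
      rw [hu₀, LinearMap.sum_apply] at hy0
      have hnp : ∀ j' ∈ Jg, uG j' y ≤ 0 := fun j' _ => gen_mem_dualCone hσ j' y hy.1
      exact (Finset.sum_eq_zero_iff_of_nonpos hnp).1 hy0 j hj
    exact hle hx
  have haff : ∀ y : (affineSpan ℝ τ : AffineSubspace ℝ (Fin n → ℝ)),
      (y : Fin n → ℝ) ∈ Submodule.span ℝ τ := by
    intro y
    have hQ : affineSpan ℝ τ ≤ (Submodule.span ℝ τ).toAffineSubspace :=
      affineSpan_le.2 (fun z hz => Submodule.subset_span hz)
    exact hQ y.2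
  have hwaff : w ∈ affineSpan ℝ τ := subset_affineSpan ℝ τ hwτ
  have hintr : w ∈ intrinsicInterior ℝ τ := by
    refine ⟨⟨w, hwaff⟩, ?_, rfl⟩
    rw [mem_interior]
    refine ⟨(↑) ⁻¹' (⋂ j ∈ Finset.univ \ Jg, {x : Fin n → ℝ | uG j x < 0}), ?_, ?_, ?_⟩
    · intro y hy
      rw [mem_preimage] at hy ⊢
      have hyspan := haff y
      have hylt : ∀ j ∉ Jg, uG j (y : Fin n → ℝ) < 0 := by
        intro j hj
        exact mem_iInter₂.1 hy j (Finset.mem_sdiff.2 ⟨Finset.mem_univ j, hj⟩)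
      constructor
      · rw [hσ, mem_iInter]
        intro j
        by_cases hj : j ∈ Jg
        · rw [mem_setOf_eq, hker _ hyspan j hj]
        · exact le_of_lt (hylt j hj)
      · rw [mem_setOf_eq, hu₀, LinearMap.sum_apply]
        exact Finset.sum_eq_zero fun j hj => hker _ hyspan j hj
    · refine IsOpen.preimage continuous_subtype_val ?_
      refine isOpen_biInter_finset fun j _ => ?_
      have hcont : Continuous (uG j) := LinearMap.continuous_of_finiteDimensional _
      exact isOpen_lt hcont continuous_const
    · rw [mem_preimage]
      refine mem_iInter₂.2 fun j hj => ?_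
      rw [Finset.mem_sdiff] at hj
      have := hgen_wneg j hj.2
      simp only [mem_setOf_eq]
      linarith
  exact ⟨p, w, hpP, hrec, hwσ, fun uu => (main uu).1, fun uu => (main uu).2, hintr⟩

end LemmaA

section Assembly

variable {n : ℕ} {σ₀ : Set (Fin n → ℝ)}

lemma dec_closure {h : ↥(dualCone σ₀) → EReal} (S : Set (Set (Fin n → ℝ))) (hSfin : S.Finite)
    (hmem : h ∈ closure (iotaTrop σ₀ '' ⋃₀ S)) :
    ∃ P ∈ S, h ∈ closure (iotaTrop σ₀ '' P) := by
  rw [sUnion_eq_biUnion, image_iUnion₂, hSfin.closure_biUnion] at hmem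
  rw [mem_iUnion₂] at hmem
  obtain ⟨i, hi, hmem⟩ := hmem
  exact ⟨i, hi, hmem⟩

end Assembly

theorem closure_triple_inter_supports' {n : ℕ} (σ₀ : Set (Fin n → ℝ))
    (hσ₀ : IsPolyCone σ₀) (hpt : IsPointedSet σ₀)
    (𝒞 𝒞' 𝒬 : Set (Set (Fin n → ℝ)))
    (h𝒞fin : 𝒞.Finite) (h𝒞'fin : 𝒞'.Finite) (h𝒬fin : 𝒬.Finite)
    (h𝒞 : ∀ P ∈ 𝒞, IsPolyhedron P) (h𝒞' : ∀ P ∈ 𝒞', IsPolyhedron P)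
    (h𝒬 : ∀ Q ∈ 𝒬, IsPolyhedron Q)
    (hcompatQ : ∀ Q ∈ 𝒬, ∀ τ : Set (Fin n → ℝ), IsFaceOfCone σ₀ τ →
      τ ⊆ recCone Q ∨ intrinsicInterior ℝ τ ∩ recCone Q = ∅)
    (hcompatPQ : ∀ P ∈ 𝒞, ∀ Q ∈ 𝒬, (P ∩ Q).Nonempty →
      ∀ τ : Set (Fin n → ℝ), IsFaceOfCone σ₀ τ →
        τ ⊆ recCone (P ∩ Q) ∨ intrinsicInterior ℝ τ ∩ recCone (P ∩ Q) = ∅) :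
    (NRext σ₀ ∩ closure (iotaTrop σ₀ '' ⋃₀ 𝒞)) ∩
        (NRext σ₀ ∩ closure (iotaTrop σ₀ '' ⋃₀ 𝒞')) ∩
        (NRext σ₀ ∩ closure (iotaTrop σ₀ '' ⋃₀ 𝒬)) =
      NRext σ₀ ∩ closure (iotaTrop σ₀ '' (⋃₀ 𝒞 ∩ ⋃₀ 𝒞' ∩ ⋃₀ 𝒬)) := by
  classical
  apply Set.eq_of_subset_of_subset
  · rintro h ⟨⟨⟨hN, hc1⟩, -, hc2⟩, -, hc3⟩
    refine ⟨hN, ?_⟩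
    obtain ⟨m, uG, hσ⟩ := hσ₀
    obtain ⟨P, hP𝒞, hclP⟩ := dec_closure 𝒞 h𝒞fin hc1
    obtain ⟨P', hP'𝒞, hclP'⟩ := dec_closure 𝒞' h𝒞'fin hc2
    obtain ⟨Q, hQ𝒬, hclQ⟩ := dec_closure 𝒬 h𝒬fin hc3
    set uS : Fin m → ↥(dualCone σ₀) := fun j => ⟨uG j, gen_mem_dualCone hσ j⟩ with huS
    set Jg : Finset (Fin m) := Finset.univ.filter (fun j => h (uS j) ≠ ⊥) with hJgdef
    have hJg : ∀ j, j ∈ Jg ↔ h ⟨uG j, gen_mem_dualCone hσ j⟩ ≠ ⊥ := by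
      intro j
      rw [hJgdef, Finset.mem_filter]
      simp [huS]
    set u₀ : (Fin n → ℝ) →ₗ[ℝ] ℝ := ∑ j ∈ Jg, uG j with hu₀def
    have hu₀mem : u₀ ∈ dualCone σ₀ :=
      dualCone_sum _ _ (fun j _ => gen_mem_dualCone hσ j)
    set u₀S : ↥(dualCone σ₀) := ⟨u₀, hu₀mem⟩ with hu₀S
    have hu₀sum : h u₀S = ∑ j ∈ Jg, h (uS j) := nr_sum hN Jg uS u₀S rfl
    have hu₀ne : h u₀S ≠ ⊥ := by
      rw [hu₀sum, Ne, esum_eq_bot_iff]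
      rintro ⟨j, hjJ, hjb⟩
      exact ((hJg j).1 hjJ) hjb
    obtain ⟨p, w, hpP, hrecP, hwσ, hfinP, hbotP, hintP⟩ :=
      lemmaA hσ hN Jg hJg u₀ hu₀def (h𝒞 P hP𝒞) hclP
    obtain ⟨p', w', hp'P, hrecP', hw'σ, hfinP', hbotP', hintP'⟩ :=
      lemmaA hσ hN Jg hJg u₀ hu₀def (h𝒞' P' hP'𝒞) hclP'
    obtain ⟨q, wQ, hqQ, hrecQ, hwQσ, hfinQ, hbotQ, hintQ⟩ :=
      lemmaA hσ hN Jg hJg u₀ hu₀def (h𝒬 Q hQ𝒬) hclQ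
    set τ : Set (Fin n → ℝ) := σ₀ ∩ {x | u₀ x = 0} with hτdef
    have hface : IsFaceOfCone σ₀ τ := by
      refine ⟨u₀, fun x hx => hu₀mem x hx, ?_⟩
      ext x
      exact ⟨fun hx => ⟨hx.1, hx.2⟩, fun hx => ⟨hx.1, hx.2⟩⟩
    have hwQrecQ : wQ ∈ recCone Q := fun x hx => by simpa using hrecQ 1 zero_le_one x hx
    have hτQ : τ ⊆ recCone Q := by
      rcases hcompatQ Q hQ𝒬 τ hface with H | H
      · exact H
      · exact absurd H (Nonempty.ne_empty ⟨wQ, hintQ, hwQrecQ⟩)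
    -- the little τ-membership machine
    have τmem : ∀ (s ww : Fin n → ℝ), (∀ j ∈ Jg, uG j s = 0) → u₀ s = 0 →
        (∀ j ∈ Jg, uG j ww = 0) → u₀ ww = 0 → (∀ j ∉ Jg, uG j ww < 0) →
        ∃ T : ℝ, 0 ≤ T ∧ ∀ t ≥ T, s + t • ww ∈ τ := by
      intro s ww hs hs0 hw1 hw2 hw3
      set T := ∑ j ∈ Finset.univ \ Jg, max 0 (uG j s / (-(uG j ww))) with hT
      have hT0 : 0 ≤ T := Finset.sum_nonneg fun j _ => le_max_left _ _
      refine ⟨T, hT0, fun t ht => ?_⟩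
      have hj' : ∀ j ∉ Jg, uG j s + t * uG j ww ≤ 0 := by
        intro j hj
        have hwneg := hw3 j hj
        have hTj : max 0 (uG j s / (-(uG j ww))) ≤ T :=
          Finset.single_le_sum (f := fun j => max 0 (uG j s / (-(uG j ww))))
            (fun j' _ => le_max_left _ _) (Finset.mem_sdiff.2 ⟨Finset.mem_univ j, hj⟩)
        have h1 : uG j s / (-(uG j ww)) ≤ t :=
          le_trans (le_trans (le_max_right _ _) hTj) ht
        have h2 : uG j s ≤ t * (-(uG j ww)) := by
          rw [div_le_iff₀ (by linarith : (0:ℝ) < -(uG j ww))] at h1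
          linarith
        linarith
      constructor
      · rw [hσ, mem_iInter]
        intro j
        have hval : uG j (s + t • ww) = uG j s + t * uG j ww := by
          rw [map_add, map_smul, smul_eq_mul]
        simp only [mem_setOf_eq]
        rw [hval]
        by_cases hjJ : j ∈ Jg
        · rw [hs j hjJ, hw1 j hjJ]; simp
        · exact hj' j hjJ
      · simp only [mem_setOf_eq]
        rw [map_add, map_smul, smul_eq_mul, hs0, hw2]
        ring
    -- values of p, p', q agree on Jg and u₀
    have hbotS : ∀ j ∉ Jg, h (uS j) = ⊥ := by
      intro j hj
      by_contra hne
      exact hj ((hJg j).2 hne)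
    obtain ⟨T₀, hT₀0, hT₀⟩ := τmem (p - q) w
        (fun j hj => by
          rw [map_sub, (hfinP (uS j) ((hJg j).1 hj)).1, (hfinQ (uS j) ((hJg j).1 hj)).1, sub_self])
        (by rw [map_sub, (hfinP u₀S hu₀ne).1, (hfinQ u₀S hu₀ne).1, sub_self])
        (fun j hj => (hfinP (uS j) ((hJg j).1 hj)).2)
        ((hfinP u₀S hu₀ne).2)
        (fun j hj => hbotP (uS j) (hbotS j hj))
    set x₀ : Fin n → ℝ := p + T₀ • w with hx₀def
    have hx₀P : x₀ ∈ P := hrecP T₀ hT₀0 p hpP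
    have hx₀Q : x₀ ∈ Q := by
      have hmemτ : (p - q) + T₀ • w ∈ τ := hT₀ T₀ le_rfl
      have hq := hτQ hmemτ q hqQ
      have heq : q + ((p - q) + T₀ • w) = x₀ := by rw [hx₀def]; abel
      rwa [heq] at hq
    have hPQne : (P ∩ Q).Nonempty := ⟨x₀, hx₀P, hx₀Q⟩
    have hwrecPQ : w ∈ recCone (P ∩ Q) := by
      rintro x ⟨hxP, hxQ⟩
      refine ⟨by simpa using hrecP 1 zero_le_one x hxP, ?_⟩
      have hwτ' : w ∈ τ := ⟨hwσ, (hfinP u₀S hu₀ne).2⟩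
      exact hτQ hwτ' x hxQ
    have hτPQ : τ ⊆ recCone (P ∩ Q) := by
      rcases hcompatPQ P hP𝒞 Q hQ𝒬 hPQne τ hface with H | H
      · exact H
      · exact absurd H (Nonempty.ne_empty ⟨w, hintP, hwrecPQ⟩)
    -- final curve
    obtain ⟨T₁, hT₁0, hT₁⟩ := τmem (p' - x₀) w'
        (fun j hj => by
          rw [map_sub, hx₀def, map_add, map_smul, smul_eq_mul,
            (hfinP' (uS j) ((hJg j).1 hj)).1, (hfinP (uS j) ((hJg j).1 hj)).1,
            (hfinP (uS j) ((hJg j).1 hj)).2]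
          ring)
        (by
          rw [map_sub, hx₀def, map_add, map_smul, smul_eq_mul,
            (hfinP' u₀S hu₀ne).1, (hfinP u₀S hu₀ne).1, (hfinP u₀S hu₀ne).2]
          ring)
        (fun j hj => (hfinP' (uS j) ((hJg j).1 hj)).2)
        ((hfinP' u₀S hu₀ne).2)
        (fun j hj => hbotP' (uS j) (hbotS j hj))
    set xt : ℕ → (Fin n → ℝ) := fun k => p' + (T₁ + k) • w' with hxt
    have hxtmem : ∀ k, xt k ∈ P ∩ Q ∧ xt k ∈ P' := by
      intro k
      have hk0 : (0:ℝ) ≤ (k : ℝ) := Nat.cast_nonneg k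
      have ht0 : (0:ℝ) ≤ T₁ + k := by linarith
      constructor
      · have hmemτ := hT₁ (T₁ + k) (by linarith)
        have hmem := hτPQ hmemτ x₀ ⟨hx₀P, hx₀Q⟩
        have heq : x₀ + ((p' - x₀) + (T₁ + (k:ℝ)) • w') = xt k := by rw [hxt]; abel
        rwa [heq] at hmem
      · exact hrecP' (T₁ + k) ht0 p' hp'P
    have htend : Tendsto (fun k : ℕ => iotaTrop σ₀ (xt k)) atTop (nhds h) := by
      rw [tendsto_pi_nhds]
      intro uu
      have hval : ∀ k : ℕ, (uu : (Fin n → ℝ) →ₗ[ℝ] ℝ) (xt k)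
          = ((uu : (Fin n → ℝ) →ₗ[ℝ] ℝ) p' + T₁ * (uu : (Fin n → ℝ) →ₗ[ℝ] ℝ) w')
            + (k : ℝ) * (uu : (Fin n → ℝ) →ₗ[ℝ] ℝ) w' := by
        intro k
        rw [hxt]
        simp only [map_add, map_smul, smul_eq_mul]
        ring
      by_cases hne : h uu = ⊥
      · rw [hne]
        rw [EReal.tendsto_nhds_bot_iff_real]
        intro X
        have hwneg : (uu : (Fin n → ℝ) →ₗ[ℝ] ℝ) w' < 0 := hbotP' uu hne
        have hreal : Tendsto (fun k : ℕ => (uu : (Fin n → ℝ) →ₗ[ℝ] ℝ) (xt k)) atTop atBot := by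
          simp only [hval]
          apply tendsto_atBot_add_const_left
          exact Tendsto.atTop_mul_const_of_neg hwneg tendsto_natCast_atTop_atTop
        refine ((tendsto_atBot.1 hreal) (X - 1)).mono fun k hk => ?_
        show ((((uu : (Fin n → ℝ) →ₗ[ℝ] ℝ) (xt k)) : ℝ) : EReal) < (X : EReal)
        exact EReal.coe_lt_coe_iff.2 (by linarith)
      · obtain ⟨hpv, hwv⟩ := hfinP' uu hne
        have hvals : ∀ k : ℕ, iotaTrop σ₀ (xt k) uu = ((h uu).toReal : EReal) := by
          intro k
          show ((((uu : (Fin n → ℝ) →ₗ[ℝ] ℝ) (xt k)) : ℝ) : EReal) = _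
          rw [hval k, hwv, hpv]
          norm_num
        simp only [hvals]
        have hco : ((h uu).toReal : EReal) = h uu := EReal.coe_toReal (hN.1 uu) hne
        rw [hco]
        exact tendsto_const_nhds
    have hmemim : ∀ᶠ k in atTop,
        iotaTrop σ₀ (xt k) ∈ iotaTrop σ₀ '' (⋃₀ 𝒞 ∩ ⋃₀ 𝒞' ∩ ⋃₀ 𝒬) := by
      refine Filter.Eventually.of_forall fun k => ?_
      refine ⟨xt k, ⟨⟨?_, ?_⟩, ?_⟩, rfl⟩
      · exact ⟨P, hP𝒞, (hxtmem k).1.1⟩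
      · exact ⟨P', hP'𝒞, (hxtmem k).2⟩
      · exact ⟨Q, hQ𝒬, (hxtmem k).1.2⟩
    exact mem_closure_of_tendsto htend hmemim
  · rintro h ⟨hN, hcl⟩
    have h1 : ⋃₀ 𝒞 ∩ ⋃₀ 𝒞' ∩ ⋃₀ 𝒬 ⊆ ⋃₀ 𝒞 := fun x hx => hx.1.1
    have h2 : ⋃₀ 𝒞 ∩ ⋃₀ 𝒞' ∩ ⋃₀ 𝒬 ⊆ ⋃₀ 𝒞' := fun x hx => hx.1.2
    have h3 : ⋃₀ 𝒞 ∩ ⋃₀ 𝒞' ∩ ⋃₀ 𝒬 ⊆ ⋃₀ 𝒬 := fun x hx => hx.2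
    exact ⟨⟨⟨hN, closure_mono (image_mono h1) hcl⟩,
      hN, closure_mono (image_mono h2) hcl⟩,
      hN, closure_mono (image_mono h3) hcl⟩

end TropClosureAux

/-- Let `σ₀ ⊆ ℝⁿ` be a pointed polyhedral cone and `𝒞, 𝒞', 𝒬` finite collections of
polyhedra in `ℝⁿ`.  Suppose that for every `Q ∈ 𝒬` and every face `τ` of `σ₀` either
`τ ⊆ ρ(Q)` or `relint(τ) ∩ ρ(Q) = ∅`, and the same holds for every nonempty `P ∩ Q` with
`P ∈ 𝒞`, `Q ∈ 𝒬`.  Then, taking closures in `N_ℝ(σ₀)` (i.e. intersecting ambient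
pointwise-convergence closures with `N_ℝ(σ₀)`), one has
`closure(ι(|𝒞|)) ∩ closure(ι(|𝒞'|)) ∩ closure(ι(|𝒬|)) = closure(ι(|𝒞| ∩ |𝒞'| ∩ |𝒬|))`. -/
theorem closure_triple_inter_supports {n : ℕ} (σ₀ : Set (Fin n → ℝ))
    (hσ₀ : IsPolyCone σ₀) (hpt : IsPointedSet σ₀)
    (𝒞 𝒞' 𝒬 : Set (Set (Fin n → ℝ)))
    (h𝒞fin : 𝒞.Finite) (h𝒞'fin : 𝒞'.Finite) (h𝒬fin : 𝒬.Finite)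
    (h𝒞 : ∀ P ∈ 𝒞, IsPolyhedron P) (h𝒞' : ∀ P ∈ 𝒞', IsPolyhedron P)
    (h𝒬 : ∀ Q ∈ 𝒬, IsPolyhedron Q)
    (hcompatQ : ∀ Q ∈ 𝒬, ∀ τ : Set (Fin n → ℝ), IsFaceOfCone σ₀ τ →
      τ ⊆ recCone Q ∨ intrinsicInterior ℝ τ ∩ recCone Q = ∅)
    (hcompatPQ : ∀ P ∈ 𝒞, ∀ Q ∈ 𝒬, (P ∩ Q).Nonempty →
      ∀ τ : Set (Fin n → ℝ), IsFaceOfCone σ₀ τ →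
        τ ⊆ recCone (P ∩ Q) ∨ intrinsicInterior ℝ τ ∩ recCone (P ∩ Q) = ∅) :
    (NRext σ₀ ∩ closure (iotaTrop σ₀ '' ⋃₀ 𝒞)) ∩
        (NRext σ₀ ∩ closure (iotaTrop σ₀ '' ⋃₀ 𝒞')) ∩
        (NRext σ₀ ∩ closure (iotaTrop σ₀ '' ⋃₀ 𝒬)) =
      NRext σ₀ ∩ closure (iotaTrop σ₀ '' (⋃₀ 𝒞 ∩ ⋃₀ 𝒞' ∩ ⋃₀ 𝒬)) := by
  exact TropClosureAux.closure_triple_inter_supports' σ₀ hσ₀ hpt 𝒞 𝒞' 𝒬 h𝒞fin h𝒞'fin h𝒬fin h𝒞 h𝒞' h𝒬 hcompatQ hcompatPQ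
end
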